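/- arXiv:1407.3112 — 7 statements merged into one kernel-verified Lean document; each statement's English description precedes it below -/
import Mathlib

section
/- Let G be a finite group and Ḡ = F₂/N_G as in the context. Then: (1) the intersection of all subgroups of Ḡ of index G is the trivial subgroup; (2) if Γ is any group in which the intersection of all subgroups of index G is trivial, and x′, y′ are two elements generating Γ, then there exists a group homomorphism Ḡ → Γ sending x to x′ and y to y′; (3) if x′, y′ is any pair of elements generating Ḡ, then there is an automorphism of Ḡ sending x to x′ and y to y′. -/
/-- The free group on two generators. -/
abbrev F2 : Type := FreeGroup Bool

/-- The generator `x` of `F₂`. -/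
def fx : F2 := FreeGroup.of true

/-- The generator `y` of `F₂`. -/
def fy : F2 := FreeGroup.of false

/-- A subgroup `N` of `Γ` *has index `G`* if it is normal with quotient isomorphic to `G`,
equivalently it is the kernel of a surjective homomorphism onto `G`. -/
def HasIndex (G : Type) [Group G] {Γ : Type} [Group Γ] (N : Subgroup Γ) : Prop :=
  ∃ f : Γ →* G, Function.Surjective f ∧ f.ker = N

/-- `N_G`: the intersection of all subgroups of `F₂` of index `G`. -/
def NG (G : Type) [Group G] : Subgroup F2 := sInf {N | HasIndex G N}

instance NG_normal (G : Type) [Group G] : (NG G).Normal := by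
  constructor
  intro n hn g
  rw [NG, Subgroup.mem_sInf] at hn ⊢
  rintro N ⟨f, hf, rfl⟩
  have h1 : f n = 1 := hn f.ker ⟨f, hf, rfl⟩
  simp [MonoidHom.mem_ker, h1]

/-- The group `Ḡ = F₂ / N_G`. -/
abbrev Gbar (G : Type) [Group G] : Type := F2 ⧸ NG G

/-- The canonical generator `x` of `Ḡ`. -/
def xbar (G : Type) [Group G] : Gbar G := QuotientGroup.mk fx

/-- The canonical generator `y` of `Ḡ`. -/
def ybar (G : Type) [Group G] : Gbar G := QuotientGroup.mk fy

section Aux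

variable (G : Type) [Group G] [Finite G]

/-- Homs out of `F2` into a finite group form a finite type. -/
lemma finite_homs : Finite (F2 →* G) := by
  apply Finite.of_injective (fun f : F2 →* G => fun b : Bool => f (FreeGroup.of b))
  intro f g h
  exact FreeGroup.ext_hom f g fun b => congrFun h b

/-- `Ḡ` is a finite group. -/
lemma finite_Gbar : Finite (Gbar G) := by
  have : Finite (F2 →* G) := finite_homs G
  set ψ : F2 →* ∀ _ : {f : F2 →* G // Function.Surjective f}, G :=
    Pi.monoidHom (fun f => f.1) with hψ
  have hker : NG G = ψ.ker := by
    ext w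
    simp only [NG, Subgroup.mem_sInf, MonoidHom.mem_ker, hψ, Pi.monoidHom]
    constructor
    · intro h
      funext f
      have := h f.1.ker ⟨f.1, f.2, rfl⟩
      simpa [MonoidHom.mem_ker] using this
    · rintro h N ⟨f, hf, rfl⟩
      have := congrFun h ⟨f, hf⟩
      simpa [MonoidHom.mem_ker] using this
  have e : Gbar G ≃* F2 ⧸ ψ.ker := QuotientGroup.quotientMulEquivOfEq hker
  have : Finite (F2 ⧸ ψ.ker) :=
    Finite.of_injective _ (QuotientGroup.kerLift_injective ψ)
  exact Finite.of_injective e e.injective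

/-- Every surjective hom `F2 → G` factors through `Ḡ`. -/
lemma NG_le_ker {h : F2 →* G} (hs : Function.Surjective h) : NG G ≤ h.ker := by
  intro w hw
  rw [NG, Subgroup.mem_sInf] at hw
  exact hw h.ker ⟨h, hs, rfl⟩

/-- Part (1): the intersection of the index-`G` subgroups of `Ḡ` is trivial. -/
lemma part1 : sInf {N : Subgroup (Gbar G) | HasIndex G N} = ⊥ := by
  rw [eq_bot_iff]
  intro g hg
  rw [Subgroup.mem_sInf] at hg
  induction g using QuotientGroup.induction_on with
  | H w =>
    simp only [Subgroup.mem_bot]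
    have hw : w ∈ NG G := by
      rw [NG, Subgroup.mem_sInf]
      rintro N ⟨h, hs, rfl⟩
      -- lift h to Ḡ
      set hb : Gbar G →* G := QuotientGroup.lift (NG G) h (NG_le_ker G hs) with hhb
      have hbs : Function.Surjective hb := by
        intro g
        obtain ⟨w', rfl⟩ := hs g
        exact ⟨QuotientGroup.mk w', rfl⟩
      have := hg hb.ker ⟨hb, hbs, rfl⟩
      simpa [MonoidHom.mem_ker, hhb] using this
    exact (QuotientGroup.eq_one_iff w).mpr hw

/-- Part (2). -/
lemma part2 (Γ : Type) [Group Γ] (hΓ : sInf {N : Subgroup Γ | HasIndex G N} = ⊥)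
    (x' y' : Γ) (hgen : Subgroup.closure {x', y'} = ⊤) :
    ∃ f : Gbar G →* Γ, f (xbar G) = x' ∧ f (ybar G) = y' := by
  set φ : F2 →* Γ := FreeGroup.lift (fun b => if b then x' else y') with hφ
  have hφx : φ fx = x' := by simp [hφ, fx]
  have hφy : φ fy = y' := by simp [hφ, fy]
  have hle : NG G ≤ φ.ker := by
    intro w hw
    rw [MonoidHom.mem_ker]
    have : φ w ∈ sInf {N : Subgroup Γ | HasIndex G N} := by
      rw [Subgroup.mem_sInf]
      rintro N ⟨f, hf, rfl⟩
      have hsurj : Function.Surjective (f.comp φ) := by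
        rw [← MonoidHom.range_eq_top, eq_top_iff]
        calc ⊤ = Subgroup.map f ⊤ := (Subgroup.map_top_of_surjective f hf).symm
          _ = Subgroup.map f (Subgroup.closure {x', y'}) := by rw [hgen]
          _ = Subgroup.closure {f x', f y'} := by
              rw [MonoidHom.map_closure, Set.image_pair]
          _ ≤ (f.comp φ).range := by
              rw [Subgroup.closure_le]
              rintro a (rfl | rfl)
              · exact ⟨fx, by simp [hφx]⟩
              · exact ⟨fy, by simp [hφy]⟩
      rw [NG, Subgroup.mem_sInf] at hw
      have h1 := hw (f.comp φ).ker ⟨f.comp φ, hsurj, rfl⟩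
      simpa [MonoidHom.mem_ker] using h1
    rw [hΓ] at this
    simpa using this
  refine ⟨QuotientGroup.lift (NG G) φ hle, ?_, ?_⟩
  · simpa [xbar] using hφx
  · simpa [ybar] using hφy



/-- Part (3). -/
lemma part3 (x' y' : Gbar G) (hgen : Subgroup.closure {x', y'} = ⊤) :
    ∃ φ : MulAut (Gbar G), φ (xbar G) = x' ∧ φ (ybar G) = y' := by
  obtain ⟨f, hx, hy⟩ := part2 G (Gbar G) (part1 G) x' y' hgen
  have : Finite (Gbar G) := finite_Gbar G
  have hsurj : Function.Surjective f := by
    rw [← MonoidHom.range_eq_top, eq_top_iff, ← hgen, Subgroup.closure_le]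
    rintro a (rfl | rfl)
    · exact ⟨xbar G, hx⟩
    · exact ⟨ybar G, hy⟩
  have hinj : Function.Injective f := Finite.injective_iff_surjective.mpr hsurj
  exact ⟨MulEquiv.ofBijective f ⟨hinj, hsurj⟩, hx, hy⟩

/-- Lemma (basic properties of `Ḡ`): (1) the intersection of all subgroups of `Ḡ` of index `G`
is trivial; (2) if `Γ` is any group in which the intersection of all subgroups of index `G` is
trivial, and `x'`, `y'` generate `Γ`, then there is a homomorphism `Ḡ → Γ` with `x ↦ x'`,
`y ↦ y'`; (3) if `x'`, `y'` generate `Ḡ`, then there is an automorphism of `Ḡ` with `x ↦ x'`,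
`y ↦ y'`. -/
theorem stmt0 (G : Type) [Group G] [Finite G] :
    (sInf {N : Subgroup (Gbar G) | HasIndex G N} = ⊥) ∧
    (∀ (Γ : Type) [Group Γ], sInf {N : Subgroup Γ | HasIndex G N} = ⊥ →
      ∀ x' y' : Γ, Subgroup.closure {x', y'} = ⊤ →
        ∃ f : Gbar G →* Γ, f (xbar G) = x' ∧ f (ybar G) = y') ∧
    (∀ x' y' : Gbar G, Subgroup.closure {x', y'} = ⊤ →
      ∃ φ : MulAut (Gbar G), φ (xbar G) = x' ∧ φ (ybar G) = y') := by
  exact ⟨part1 G, fun Γ _ hΓ => part2 G Γ hΓ, part3 G⟩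
end Aux
end

section
/- Let G be a finite group. Let x̃ = (x_1,…,x_r) and ỹ = (y_1,…,y_r) in the direct power G^r, and let G̃ = ⟨x̃, ỹ⟩ be the subgroup of G^r they generate. Then there is a group isomorphism Ḡ → G̃ sending the canonical generator x of Ḡ to x̃ and the canonical generator y of Ḡ to ỹ. -/
/-- `𝒫`: the set of pairs of elements generating `G`. -/
def GenPairs (G : Type) [Group G] : Set (G × G) := {p | Subgroup.closure {p.1, p.2} = ⊤}

/-- Let `(x_1,y_1), …, (x_r,y_r)` be a system of representatives for the orbits of `Aut(G)`
on `𝒫`. Let `x̃ = (x_1,…,x_r)` and `ỹ = (y_1,…,y_r)` in `G^r` and let `G̃` be the subgroup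
they generate. Then there is an isomorphism `Ḡ ≃ G̃` with `x ↦ x̃`, `y ↦ ỹ`. -/
theorem stmt1 (G : Type) [Group G] [Finite G]
    (r : ℕ) (rep : Fin r → G × G)
    (hrep : ∀ i, rep i ∈ GenPairs G)
    (hdist : ∀ i j : Fin r, (∃ α : MulAut G, (α (rep i).1, α (rep i).2) = rep j) → i = j)
    (hcover : ∀ q ∈ GenPairs G, ∃ i : Fin r, ∃ α : MulAut G, (α (rep i).1, α (rep i).2) = q) :
    ∃ e : Gbar G ≃* ↥(Subgroup.closure
        ({fun i => (rep i).1, fun i => (rep i).2} : Set (Fin r → G))),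
      (e (xbar G) : Fin r → G) = (fun i => (rep i).1) ∧
      (e (ybar G) : Fin r → G) = (fun i => (rep i).2) := by
  classical
  set xt : Fin r → G := fun i => (rep i).1 with hxt
  set yt : Fin r → G := fun i => (rep i).2 with hyt
  set φ : F2 →* (Fin r → G) := FreeGroup.lift (fun b : Bool => if b then xt else yt) with hφ
  have hφx : φ fx = xt := by simp [hφ, fx]
  have hφy : φ fy = yt := by simp [hφ, fy]
  -- the two coordinate homomorphisms
  have hker : φ.ker = NG G := by
    apply le_antisymm
    · -- ker φ ≤ every subgroup of index G
      intro w hw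
      rw [NG, Subgroup.mem_sInf]
      rintro N ⟨f, hf, rfl⟩
      -- (f fx, f fy) generates G
      have hgen : (f fx, f fy) ∈ GenPairs G := by
        have h1 : Subgroup.closure (Set.range (FreeGroup.of : Bool → F2)) = ⊤ :=
          FreeGroup.closure_range_of Bool
        have h2 : Subgroup.map f ⊤ = ⊤ := by
          rw [← MonoidHom.range_eq_map, MonoidHom.range_eq_top]; exact hf
        have h3 : Set.range (FreeGroup.of : Bool → F2) = {fx, fy} := by
          ext w; constructor
          · rintro ⟨b, rfl⟩; cases b <;> simp [fx, fy]
          · rintro (rfl | rfl) <;> [exact ⟨true, rfl⟩; exact ⟨false, rfl⟩]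
        have := (Subgroup.map f ⊤).eq_top_iff'
        rw [GenPairs, Set.mem_setOf_eq]
        rw [← h1, h3, MonoidHom.map_closure] at h2
        simpa [Set.image_insert_eq] using h2
      obtain ⟨i, α, hα⟩ := hcover _ hgen
      -- f equals α ∘ eval i ∘ φ
      have hfeq : f = (α.toMonoidHom.comp ((Pi.evalMonoidHom (fun _ => G) i).comp φ)) := by
        apply FreeGroup.ext_hom
        intro b
        cases b
        · show f fy = α (φ fy i)
          rw [hφy]
          have := congrArg Prod.snd hα
          simpa [yt] using this.symm
        · show f fx = α (φ fx i)
          rw [hφx]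
          have := congrArg Prod.fst hα
          simpa [xt] using this.symm
      have hw1 : φ w = 1 := hw
      simp [MonoidHom.mem_ker, hfeq, hw1]
    · -- NG ≤ ker φ
      intro w hw
      rw [NG, Subgroup.mem_sInf] at hw
      rw [MonoidHom.mem_ker]
      funext i
      have hsurj : Function.Surjective ((Pi.evalMonoidHom (fun _ => G) i).comp φ) := by
        rw [← MonoidHom.range_eq_top, eq_top_iff, ← hrep i]
        rw [Subgroup.closure_le]
        rintro g (rfl | rfl)
        · exact ⟨fx, by simp [hφx, xt]⟩
        · exact ⟨fy, by simp [hφy, yt]⟩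
      have := hw _ ⟨(Pi.evalMonoidHom (fun _ => G) i).comp φ, hsurj, rfl⟩
      simpa [MonoidHom.mem_ker] using this
  have hrange : φ.range = Subgroup.closure ({xt, yt} : Set (Fin r → G)) := by
    rw [hφ, FreeGroup.range_lift_eq_closure]
    congr 1
    ext v; constructor
    · rintro ⟨b, rfl⟩; cases b <;> simp
    · rintro (rfl | rfl) <;> [exact ⟨true, rfl⟩; exact ⟨false, rfl⟩]
  refine ⟨((QuotientGroup.quotientMulEquivOfEq hker.symm).trans
      (QuotientGroup.quotientKerEquivRange φ)).trans (MulEquiv.subgroupCongr hrange), ?_, ?_⟩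
  · show ((MulEquiv.subgroupCongr hrange
        ((QuotientGroup.quotientKerEquivRange φ)
          ((QuotientGroup.quotientMulEquivOfEq hker.symm) (xbar G)))) : Fin r → G) = xt
    rw [xbar, QuotientGroup.quotientMulEquivOfEq_mk]
    have : ((QuotientGroup.quotientKerEquivRange φ) (QuotientGroup.mk fx) : Fin r → G) = φ fx := rfl
    simp only [MulEquiv.subgroupCongr, MulEquiv.coe_mk, Equiv.setCongr, Equiv.subtypeEquivProp, Equiv.subtypeEquiv_apply, Equiv.refl_apply]
    simpa [hφx] using this
  · show ((MulEquiv.subgroupCongr hrange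
        ((QuotientGroup.quotientKerEquivRange φ)
          ((QuotientGroup.quotientMulEquivOfEq hker.symm) (ybar G)))) : Fin r → G) = yt
    rw [ybar, QuotientGroup.quotientMulEquivOfEq_mk]
    have : ((QuotientGroup.quotientKerEquivRange φ) (QuotientGroup.mk fy) : Fin r → G) = φ fy := rfl
    simp only [MulEquiv.subgroupCongr, MulEquiv.coe_mk, Equiv.setCongr, Equiv.subtypeEquivProp, Equiv.subtypeEquiv_apply, Equiv.refl_apply]
    simpa [hφy] using this
end

section
/- Let G be a finite group. There is a group homomorphism Out(Ḡ) → Sym(𝒫_c) whose image lies in the centralizer in Sym(𝒫_c) of the image of the Out(G)-action, and whose corresponding action satisfies φ·[x_i, y_i]_c = [φ_i⁻¹(x_{σ(i)}), φ_i⁻¹(y_{σ(i)})]_c for every automorphism φ of Ḡ and every 1 ≤ i ≤ r, where σ = σ(φ) and the φ_i are as in the context. -/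
/-- The subgroup of inner automorphisms of `G`. -/
def Inn (G : Type) [Group G] : Subgroup (MulAut G) := (MulAut.conj : G →* MulAut G).range

instance Inn_normal (G : Type) [Group G] : (Inn G).Normal := by
  constructor
  rintro n ⟨g, rfl⟩ φ
  refine ⟨φ g, ?_⟩
  ext h
  simp [MulAut.conj_apply, MulAut.inv_def, map_mul, map_inv]

/-- The outer automorphism group of `G`. -/
abbrev OutG (G : Type) [Group G] : Type := MulAut G ⧸ Inn G

/-- The canonical projection `Aut(G) → Out(G)`. -/
def OutMk {G : Type} [Group G] : MulAut G →* OutG G := QuotientGroup.mk' (Inn G)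

/-- The setoid on `𝒫` given by simultaneous conjugation (the action of inner automorphisms). -/
def pairSetoid (G : Type) [Group G] : Setoid ↥(GenPairs G) where
  r p q := ∃ t : G, t * (p : G × G).1 * t⁻¹ = (q : G × G).1 ∧
    t * (p : G × G).2 * t⁻¹ = (q : G × G).2
  iseqv := by
    constructor
    · intro p; exact ⟨1, by simp, by simp⟩
    · rintro p q ⟨t, h1, h2⟩
      exact ⟨t⁻¹, by rw [← h1]; group, by rw [← h2]; group⟩
    · rintro p q s ⟨t, h1, h2⟩ ⟨u, h3, h4⟩
      exact ⟨u * t, by rw [← h3, ← h1]; group, by rw [← h4, ← h2]; group⟩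

/-- `𝒫_c`: the set of generating pairs of `G` up to simultaneous conjugation. -/
abbrev PC (G : Type) [Group G] : Type := Quotient (pairSetoid G)

/-- The class `[g,h]_c` in `𝒫_c` of a generating pair. -/
def pcMk {G : Type} [Group G] (p : G × G) (hp : p ∈ GenPairs G) : PC G :=
  Quotient.mk (pairSetoid G) ⟨p, hp⟩

/-- An automorphism of `G` applied to a generating pair. -/
def autPair {G : Type} [Group G] (α : MulAut G) (p : ↥(GenPairs G)) : ↥(GenPairs G) :=
  ⟨(α (p : G × G).1, α (p : G × G).2), by
    have hp : Subgroup.closure {(p : G × G).1, (p : G × G).2} = ⊤ := p.2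
    show Subgroup.closure {α (p : G × G).1, α (p : G × G).2} = ⊤
    have h1 : ({α (p : G × G).1, α (p : G × G).2} : Set G)
        = α.toMonoidHom '' {(p : G × G).1, (p : G × G).2} := by
      rw [Set.image_pair]; rfl
    rw [h1, ← MonoidHom.map_closure, hp]
    exact Subgroup.map_top_of_surjective _ α.surjective⟩

/-- The action of `Aut(G)` on `𝒫_c`, inducing the action of `Out(G)`. -/
instance pcAction (G : Type) [Group G] : MulAction (MulAut G) (PC G) where
  smul α := Quotient.map (autPair α) (by
    rintro p q ⟨t, h1, h2⟩
    refine ⟨α t, ?_, ?_⟩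
    · show α t * α (p : G × G).1 * (α t)⁻¹ = α (q : G × G).1
      rw [← map_inv, ← map_mul, ← map_mul, h1]
    · show α t * α (p : G × G).2 * (α t)⁻¹ = α (q : G × G).2
      rw [← map_inv, ← map_mul, ← map_mul, h2])
  one_smul := by
    intro z
    induction z using Quotient.ind
    rfl
  mul_smul := by
    intro a b z
    induction z using Quotient.ind
    rfl

/-- `[α(g), α(h)]_c` for a generating pair `(g,h)` and `α ∈ Aut(G)`. -/
def pcMkA {G : Type} [Group G] (α : MulAut G) (p : G × G) (hp : p ∈ GenPairs G) : PC G :=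
  α • pcMk p hp

section Aux9

variable {G : Type} [Group G]

lemma closure_fxy : Subgroup.closure ({fx, fy} : Set F2) = ⊤ := by
  have h : ({fx, fy} : Set F2) = Set.range (FreeGroup.of : Bool → F2) := by
    ext z
    constructor
    · rintro (rfl | rfl)
      exacts [⟨true, rfl⟩, ⟨false, rfl⟩]
    · rintro ⟨b, rfl⟩
      cases b
      · right; rfl
      · left; rfl
  rw [h, FreeGroup.closure_range_of]

lemma closure_xybar : Subgroup.closure ({xbar G, ybar G} : Set (Gbar G)) = ⊤ := by
  have h : ({xbar G, ybar G} : Set (Gbar G))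
      = (QuotientGroup.mk' (NG G)) '' ({fx, fy} : Set F2) := by
    rw [Set.image_pair]; rfl
  rw [h, ← MonoidHom.map_closure, closure_fxy]
  exact Subgroup.map_top_of_surjective _ (QuotientGroup.mk'_surjective _)

lemma ghom_ext {H : Type} [Group H] {q1 q2 : Gbar G →* H}
    (hx : q1 (xbar G) = q2 (xbar G)) (hy : q1 (ybar G) = q2 (ybar G)) : q1 = q2 := by
  have h : q1.comp (QuotientGroup.mk' (NG G)) = q2.comp (QuotientGroup.mk' (NG G)) := by
    apply FreeGroup.ext_hom
    intro b
    cases b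
    · exact hy
    · exact hx
  exact (MonoidHom.cancel_right (QuotientGroup.mk'_surjective _)).mp h

/-- The lift to `F₂` of a generating pair. -/
def fHom (p : ↥(GenPairs G)) : F2 →* G :=
  FreeGroup.lift (fun b => if b then (p : G × G).1 else (p : G × G).2)

lemma fHom_surj (p : ↥(GenPairs G)) : Function.Surjective (fHom p) := by
  rw [← MonoidHom.range_eq_top]
  rw [eq_top_iff, ← p.2]
  apply Subgroup.closure_le _ |>.mpr
  rintro z (rfl | rfl)
  · exact ⟨fx, by simp [fHom, fx]⟩
  · exact ⟨fy, by simp [fHom, fy]⟩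

/-- The homomorphism `Ḡ → G` attached to a generating pair. -/
def pHom (p : ↥(GenPairs G)) : Gbar G →* G :=
  QuotientGroup.lift (NG G) (fHom p) (by
    intro n hn
    rw [NG, Subgroup.mem_sInf] at hn
    exact hn (fHom p).ker ⟨fHom p, fHom_surj p, rfl⟩)

lemma pHom_x (p : ↥(GenPairs G)) : pHom p (xbar G) = (p : G × G).1 := by
  show fHom p fx = _
  simp [fHom, fx]

lemma pHom_y (p : ↥(GenPairs G)) : pHom p (ybar G) = (p : G × G).2 := by
  show fHom p fy = _
  simp [fHom, fy]

lemma pHom_unique (p : ↥(GenPairs G)) (q : Gbar G →* G)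
    (hx : q (xbar G) = (p : G × G).1) (hy : q (ybar G) = (p : G × G).2) : q = pHom p :=
  ghom_ext (by rw [hx, pHom_x]) (by rw [hy, pHom_y])

lemma pHom_surj (p : ↥(GenPairs G)) : Function.Surjective (pHom p) := by
  intro g
  obtain ⟨w, hw⟩ := fHom_surj p g
  exact ⟨QuotientGroup.mk w, hw⟩

/-- The action of an automorphism of `Ḡ` on generating pairs. -/
def actPairFun (φ : MulAut (Gbar G)) (p : ↥(GenPairs G)) : ↥(GenPairs G) :=
  ⟨(pHom p (φ⁻¹ (xbar G)), pHom p (φ⁻¹ (ybar G))), by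
    have hsurj : Function.Surjective ((pHom p).comp (φ⁻¹ : MulAut (Gbar G)).toMonoidHom) :=
      (pHom_surj p).comp (φ⁻¹ : MulAut (Gbar G)).surjective
    show Subgroup.closure {pHom p (φ⁻¹ (xbar G)), pHom p (φ⁻¹ (ybar G))} = ⊤
    have h1 : ({pHom p (φ⁻¹ (xbar G)), pHom p (φ⁻¹ (ybar G))} : Set G)
        = ((pHom p).comp (φ⁻¹ : MulAut (Gbar G)).toMonoidHom) '' {xbar G, ybar G} := by
      rw [Set.image_pair]; rfl
    rw [h1, ← MonoidHom.map_closure, closure_xybar]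
    exact Subgroup.map_top_of_surjective _ hsurj⟩

lemma pHom_actPairFun (φ : MulAut (Gbar G)) (p : ↥(GenPairs G)) :
    pHom (actPairFun φ p) = (pHom p).comp (φ⁻¹ : MulAut (Gbar G)).toMonoidHom :=
  (pHom_unique _ _ rfl rfl).symm

lemma pHom_conj (t : G) (p : ↥(GenPairs G)) (q : ↥(GenPairs G))
    (h1 : t * (p : G × G).1 * t⁻¹ = (q : G × G).1)
    (h2 : t * (p : G × G).2 * t⁻¹ = (q : G × G).2) :
    pHom q = (MulAut.conj t).toMonoidHom.comp (pHom p) :=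
  (pHom_unique _ _ (by simp [pHom_x, ← h1]) (by simp [pHom_y, ← h2])).symm

/-- The permutation of `𝒫_c` induced by an automorphism of `Ḡ`. -/
def barAct (φ : MulAut (Gbar G)) : PC G → PC G :=
  Quotient.map (actPairFun φ) (by
    rintro p q ⟨t, h1, h2⟩
    refine ⟨t, ?_, ?_⟩
    · show t * pHom p (φ⁻¹ (xbar G)) * t⁻¹ = pHom q (φ⁻¹ (xbar G))
      rw [pHom_conj t p q h1 h2]; rfl
    · show t * pHom p (φ⁻¹ (ybar G)) * t⁻¹ = pHom q (φ⁻¹ (ybar G))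
      rw [pHom_conj t p q h1 h2]; rfl)

lemma actPairFun_one (p : ↥(GenPairs G)) : actPairFun (1 : MulAut (Gbar G)) p = p := by
  apply Subtype.ext
  apply Prod.ext
  · show pHom p ((1 : MulAut (Gbar G))⁻¹ (xbar G)) = _
    simp [pHom_x]
  · show pHom p ((1 : MulAut (Gbar G))⁻¹ (ybar G)) = _
    simp [pHom_y]

lemma actPairFun_mul (φ ψ : MulAut (Gbar G)) (p : ↥(GenPairs G)) :
    actPairFun (φ * ψ) p = actPairFun φ (actPairFun ψ p) := by
  apply Subtype.ext
  apply Prod.ext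
  · show pHom p ((φ * ψ)⁻¹ (xbar G)) = pHom (actPairFun ψ p) (φ⁻¹ (xbar G))
    rw [pHom_actPairFun]
    rfl
  · show pHom p ((φ * ψ)⁻¹ (ybar G)) = pHom (actPairFun ψ p) (φ⁻¹ (ybar G))
    rw [pHom_actPairFun]
    rfl

lemma barAct_one (z : PC G) : barAct (1 : MulAut (Gbar G)) z = z := by
  induction z using Quotient.ind with
  | _ p => exact congrArg (Quotient.mk _) (actPairFun_one p)

lemma barAct_mul (φ ψ : MulAut (Gbar G)) (z : PC G) :
    barAct (φ * ψ) z = barAct φ (barAct ψ z) := by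
  induction z using Quotient.ind with
  | _ p => exact congrArg (Quotient.mk _) (actPairFun_mul φ ψ p)

/-- The permutation of `𝒫_c` induced by an automorphism of `Ḡ`, as an `Equiv`. -/
def barPerm (φ : MulAut (Gbar G)) : Equiv.Perm (PC G) where
  toFun := barAct φ
  invFun := barAct φ⁻¹
  left_inv z := by rw [← barAct_mul, inv_mul_cancel, barAct_one]
  right_inv z := by rw [← barAct_mul, mul_inv_cancel, barAct_one]

/-- `barPerm` as a monoid homomorphism. -/
def barHom (G : Type) [Group G] : MulAut (Gbar G) →* Equiv.Perm (PC G) where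
  toFun := barPerm
  map_one' := Equiv.ext fun z => barAct_one z
  map_mul' φ ψ := Equiv.ext fun z => barAct_mul φ ψ z

lemma barHom_inn (n : MulAut (Gbar G)) (hn : n ∈ Inn (Gbar G)) : barHom G n = 1 := by
  obtain ⟨g, rfl⟩ := hn
  apply Equiv.ext
  intro z
  induction z using Quotient.ind with
  | _ p =>
    show barAct (MulAut.conj g) (Quotient.mk _ p) = Quotient.mk _ p
    apply Quotient.sound
    refine ⟨pHom p g, ?_, ?_⟩
    · show pHom p g * pHom p ((MulAut.conj g)⁻¹ (xbar G)) * (pHom p g)⁻¹ = _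
      have : (MulAut.conj g)⁻¹ (xbar G) = g⁻¹ * xbar G * g := rfl
      rw [this, map_mul, map_mul, map_inv, pHom_x]
      group
    · show pHom p g * pHom p ((MulAut.conj g)⁻¹ (ybar G)) * (pHom p g)⁻¹ = _
      have : (MulAut.conj g)⁻¹ (ybar G) = g⁻¹ * ybar G * g := rfl
      rw [this, map_mul, map_mul, map_inv, pHom_y]
      group

lemma pHom_autPair (α : MulAut G) (p : ↥(GenPairs G)) :
    pHom (autPair α p) = α.toMonoidHom.comp (pHom p) :=
  (pHom_unique _ _ (by simp [pHom_x]; rfl) (by simp [pHom_y]; rfl)).symm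

end Aux9

/-- There is a homomorphism `Out(Ḡ) → Sym(𝒫_c)` whose image centralizes the `Out(G)`-action,
and whose action satisfies `φ·[x_i,y_i]_c = [φ_i⁻¹(x_{σ(i)}), φ_i⁻¹(y_{σ(i)})]_c` whenever
`p_{σ(i)} ∘ φ = φ_i ∘ p_i`. -/
theorem stmt9 (G : Type) [Group G] [Finite G]
    (r : ℕ) (rep : Fin r → G × G)
    (hrep : ∀ i, rep i ∈ GenPairs G)
    (hdist : ∀ i j : Fin r, (∃ α : MulAut G, (α (rep i).1, α (rep i).2) = rep j) → i = j)
    (hcover : ∀ q ∈ GenPairs G, ∃ i : Fin r, ∃ α : MulAut G, (α (rep i).1, α (rep i).2) = q)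
    (p : Fin r → (Gbar G →* G))
    (hp : ∀ i, p i (xbar G) = (rep i).1 ∧ p i (ybar G) = (rep i).2) :
    ∃ Φ : OutG (Gbar G) →* Equiv.Perm (PC G),
      (∀ (c : OutG (Gbar G)) (α : MulAut G) (z : PC G), Φ c (α • z) = α • Φ c z) ∧
      (∀ (φ : MulAut (Gbar G)) (σ : Equiv.Perm (Fin r)) (ψ : Fin r → MulAut G),
        (∀ i, (p (σ i)).comp φ.toMonoidHom = (ψ i).toMonoidHom.comp (p i)) →
        ∀ i : Fin r,
          Φ (OutMk φ) (pcMk (rep i) (hrep i)) = pcMkA (ψ i)⁻¹ (rep (σ i)) (hrep (σ i))) := by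
  refine ⟨QuotientGroup.lift (Inn (Gbar G)) (barHom G)
    (fun n hn => barHom_inn n hn), ?_, ?_⟩
  · intro c α z
    induction c using Quotient.ind with
    | _ φ =>
      induction z using Quotient.ind with
      | _ q =>
        show barAct φ (α • Quotient.mk _ q) = α • barAct φ (Quotient.mk _ q)
        show Quotient.mk _ (actPairFun φ (autPair α q))
          = Quotient.mk _ (autPair α (actPairFun φ q))
        apply congrArg
        apply Subtype.ext
        apply Prod.ext
        · show pHom (autPair α q) (φ⁻¹ (xbar G)) = α (pHom q (φ⁻¹ (xbar G)))
          rw [pHom_autPair]; rfl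
        · show pHom (autPair α q) (φ⁻¹ (ybar G)) = α (pHom q (φ⁻¹ (ybar G)))
          rw [pHom_autPair]; rfl
  · intro φ σ ψ hφ i
    have hpi : ∀ j, p j = pHom (⟨rep j, hrep j⟩ : ↥(GenPairs G)) := fun j =>
      pHom_unique _ _ (hp j).1 (hp j).2
    have key : ∀ z : Gbar G, p (σ i) (φ z) = ψ i (p i z) := fun z =>
      DFunLike.congr_fun (hφ i) z
    have hinv : ∀ z : Gbar G, φ (φ⁻¹ z) = z := fun z => φ.apply_symm_apply z
    have hx : p i (φ⁻¹ (xbar G)) = (ψ i)⁻¹ ((rep (σ i)).1) := by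
      have h := key (φ⁻¹ (xbar G))
      rw [hinv, (hp (σ i)).1] at h
      rw [h]
      exact ((ψ i).symm_apply_apply _).symm
    have hy : p i (φ⁻¹ (ybar G)) = (ψ i)⁻¹ ((rep (σ i)).2) := by
      have h := key (φ⁻¹ (ybar G))
      rw [hinv, (hp (σ i)).2] at h
      rw [h]
      exact ((ψ i).symm_apply_apply _).symm
    show barAct φ (pcMk (rep i) (hrep i)) = pcMkA (ψ i)⁻¹ (rep (σ i)) (hrep (σ i))
    show Quotient.mk _ (actPairFun φ ⟨rep i, hrep i⟩)
      = Quotient.mk _ (autPair (ψ i)⁻¹ ⟨rep (σ i), hrep (σ i)⟩)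
    apply congrArg
    apply Subtype.ext
    apply Prod.ext
    · show pHom (⟨rep i, hrep i⟩ : ↥(GenPairs G)) (φ⁻¹ (xbar G)) = (ψ i)⁻¹ ((rep (σ i)).1)
      rw [← hpi i]; exact hx
    · show pHom (⟨rep i, hrep i⟩ : ↥(GenPairs G)) (φ⁻¹ (ybar G)) = (ψ i)⁻¹ ((rep (σ i)).2)
      rw [← hpi i]; exact hy
end

section
/- Let G be a finite non-abelian simple group. Then: (1) Aut(G^r) is isomorphic to the wreath product Aut(G) ≀ S_r, i.e., the semidirect product of Aut(G)^r by the symmetric group S_r permuting the factors; (2) Out(G^r) is isomorphic to the wreath product Out(G) ≀ S_r; (3) the action of Out(Ḡ) on 𝒫_c is faithful. -/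
/-- The characterizing property of the action of `Out(Ḡ)` on `𝒫_c`:
`φ·[α(x_i),α(y_i)]_c = [α(φ_i⁻¹(x_{σ(i)})), α(φ_i⁻¹(y_{σ(i)}))]_c` whenever
`p_{σ(i)} ∘ φ = φ_i ∘ p_i`. -/
def IsPCAction (G : Type) [Group G] {r : ℕ} (rep : Fin r → G × G)
    (hrep : ∀ i, rep i ∈ GenPairs G) (p : Fin r → (Gbar G →* G))
    (Φ : OutG (Gbar G) →* Equiv.Perm (PC G)) : Prop :=
  ∀ (φ : MulAut (Gbar G)) (σ : Equiv.Perm (Fin r)) (ψ : Fin r → MulAut G),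
    (∀ i, (p (σ i)).comp φ.toMonoidHom = (ψ i).toMonoidHom.comp (p i)) →
    ∀ (α : MulAut G) (i : Fin r),
      Φ (OutMk φ) (pcMkA α (rep i) (hrep i)) = pcMkA (α * (ψ i)⁻¹) (rep (σ i)) (hrep (σ i))

/-- The automorphism of `Fin n → A` permuting the coordinates by `σ`. -/
def permAut (A : Type) [Group A] {n : ℕ} (σ : Equiv.Perm (Fin n)) : MulAut (Fin n → A) where
  toFun f := f ∘ σ.symm
  invFun f := f ∘ σ
  left_inv f := by ext i; simp
  right_inv f := by ext i; simp
  map_mul' f g := rfl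

/-- The homomorphism `S_n → Aut(A^n)` permuting the coordinates. -/
def permHom (A : Type) [Group A] (n : ℕ) : Equiv.Perm (Fin n) →* MulAut (Fin n → A) where
  toFun := permAut A
  map_one' := rfl
  map_mul' σ τ := rfl

/-- The wreath product `A ≀ S_n`, i.e. the semidirect product of `A^n` by the symmetric
group `S_n` permuting the factors. -/
abbrev Wreath (A : Type) [Group A] (n : ℕ) : Type :=
  (Fin n → A) ⋊[permHom A n] Equiv.Perm (Fin n)


namespace Stmt15Aux

open Function Subgroup

variable {G : Type} [Group G]

lemma center_eq_bot (hs : IsSimpleGroup G) (h : ∃ a b : G, a * b ≠ b * a) :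
    Subgroup.center G = ⊥ := by
  haveI := hs
  rcases Subgroup.Normal.eq_bot_or_eq_top (inferInstance : (Subgroup.center G).Normal) with h1 | h1
  · exact h1
  · obtain ⟨a, b, hab⟩ := h
    have ha : a ∈ Subgroup.center G := by rw [h1]; trivial
    exact absurd ((Subgroup.mem_center_iff.mp ha) b).symm hab

lemma exists_noncomm (hc : Subgroup.center G = ⊥) {z : G} (hz : z ≠ 1) :
    ∃ g : G, z * g * z⁻¹ * g⁻¹ ≠ 1 := by
  by_contra hcon
  push_neg at hcon
  apply hz
  have hmem : z ∈ Subgroup.center G := by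
    refine Subgroup.mem_center_iff.mpr fun g => ?_
    have h1 := hcon g
    rw [mul_inv_eq_one, mul_inv_eq_iff_eq_mul] at h1
    exact h1.symm
  rwa [hc, Subgroup.mem_bot] at hmem

lemma single_of_eq_one {n : ℕ} {w : Fin n → G} {i : Fin n}
    (h : ∀ j, j ≠ i → w j = 1) : w = Pi.mulSingle i (w i) := by
  funext j
  rcases eq_or_ne j i with rfl | hj
  · simp
  · rw [Pi.mulSingle_eq_of_ne hj, h j hj]

/-- The `i`-th factor subgroup of `G^n`. -/
def factorS (n : ℕ) (i : Fin n) : Subgroup (Fin n → G) :=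
  (MonoidHom.mulSingle (fun _ : Fin n => G) i).range

lemma mem_factorS {n : ℕ} {i : Fin n} {w : Fin n → G} :
    w ∈ factorS n i ↔ ∀ j, j ≠ i → w j = 1 := by
  constructor
  · rintro ⟨g, rfl⟩ j hj
    simp [MonoidHom.mulSingle_apply, Pi.mulSingle_eq_of_ne (M := fun _ : Fin n => G) hj]
  · intro h
    exact ⟨w i, (single_of_eq_one h).symm⟩

lemma factorS_le_factorS {n : ℕ} {i j : Fin n} (hs : IsSimpleGroup G)
    (h : factorS (G := G) n i ≤ factorS n j) : i = j := by
  haveI := hs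
  by_contra hij
  obtain ⟨g, hg⟩ := exists_ne (1 : G)
  have h1 : Pi.mulSingle i g ∈ factorS (G := G) n j := h ⟨g, rfl⟩
  have h2 := (mem_factorS.mp h1) i hij
  rw [Pi.mulSingle_eq_same] at h2
  exact hg h2

lemma factorS_normal {n : ℕ} (i : Fin n) : (factorS (G := G) n i).Normal := by
  constructor
  intro w hw v
  rw [mem_factorS] at hw ⊢
  intro j hj
  simp [Pi.mul_apply, hw j hj]

lemma normal_contains_factor (hc : Subgroup.center G = ⊥) (hs : IsSimpleGroup G) {n : ℕ}
    {N : Subgroup (Fin n → G)} (hN : N.Normal) {v : Fin n → G} (hv : v ∈ N) (hv1 : v ≠ 1) :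
    ∃ i : Fin n, ∀ g : G, Pi.mulSingle i g ∈ N := by
  haveI := hs
  obtain ⟨i, hi⟩ : ∃ i, v i ≠ 1 := by
    by_contra hcon; push_neg at hcon
    exact hv1 (funext fun j => hcon j)
  obtain ⟨g, hg⟩ := exists_noncomm hc hi
  refine ⟨i, ?_⟩
  have hcN : v * Pi.mulSingle i g * v⁻¹ * (Pi.mulSingle i g)⁻¹ ∈ N := by
    have h1 : Pi.mulSingle i g * v⁻¹ * (Pi.mulSingle i g)⁻¹ ∈ N := by
      simpa [mul_assoc] using hN.conj_mem _ (N.inv_mem hv) (Pi.mulSingle i g)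
    simpa [mul_assoc] using N.mul_mem hv h1
  have hcs : v * Pi.mulSingle i g * v⁻¹ * (Pi.mulSingle i g)⁻¹
      = Pi.mulSingle i (v i * g * (v i)⁻¹ * g⁻¹) := by
    funext j
    rcases eq_or_ne j i with rfl | hj
    · simp
    · simp [Pi.mulSingle_eq_of_ne (M := fun _ : Fin n => G) hj]
  rw [hcs] at hcN
  -- the comap subgroup
  set M : Subgroup G := N.comap (MonoidHom.mulSingle (fun _ : Fin n => G) i) with hM
  have hMnormal : M.Normal := by
    constructor
    intro m hm t
    have : (Pi.mulSingle i (t * m * t⁻¹) : Fin n → G)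
        = Pi.mulSingle i t * Pi.mulSingle i m * (Pi.mulSingle i t)⁻¹ := by
      rw [← Pi.mulSingle_inv, ← Pi.mulSingle_mul, ← Pi.mulSingle_mul]
    show Pi.mulSingle i (t * m * t⁻¹) ∈ N
    rw [this]
    exact hN.conj_mem _ hm _
  have hMmem : v i * g * (v i)⁻¹ * g⁻¹ ∈ M := hcN
  rcases Subgroup.Normal.eq_bot_or_eq_top hMnormal with hbot | htop
  · rw [hbot, Subgroup.mem_bot] at hMmem
    exact absurd hMmem hg
  · intro x
    have : x ∈ M := by rw [htop]; trivial
    exact this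

lemma hom_factor (hc : Subgroup.center G = ⊥) (hs : IsSimpleGroup G) {n : ℕ}
    (f : (Fin n → G) →* G) (hf : Function.Surjective f) :
    ∃ (i : Fin n) (α : MulAut G), ∀ v, f v = α (v i) := by
  haveI := hs
  classical
  set fi : Fin n → (G →* G) :=
    fun i => f.comp (MonoidHom.mulSingle (fun _ : Fin n => G) i) with hfi
  have hcomm : ∀ (i j : Fin n), i ≠ j → ∀ x y, Commute (fi i x) (fi j y) := by
    intro i j hij x y
    exact (Pi.mulSingle_commute hij x y).map f
  have hrangenormal : ∀ i : Fin n, ((fi i).range).Normal := by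
    intro i
    constructor
    rintro a ⟨x, rfl⟩ gg
    obtain ⟨v, rfl⟩ := hf gg
    have hveq : v = Pi.mulSingle i (v i) * Function.update v i 1 := by
      funext j
      rcases eq_or_ne j i with rfl | hj
      · simp
      · simp [Function.update_of_ne hj, Pi.mulSingle_eq_of_ne (M := fun _ : Fin n => G) hj]
    have hsplit : f v = fi i (v i) * f (Function.update v i 1) := by
      conv_lhs => rw [hveq, map_mul]
      rfl
    have hcom : Commute (f (Function.update v i 1)) (fi i x) := by
      have hc2 : Commute (Function.update v i 1) ((Pi.mulSingle i x : Fin n → G)) := by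
        show _ * _ = _ * _
        funext j
        rcases eq_or_ne j i with rfl | hj
        · simp
        · simp [Function.update_of_ne hj, Pi.mulSingle_eq_of_ne (M := fun _ : Fin n => G) hj]
      exact hc2.map f
    refine ⟨v i * x * (v i)⁻¹, ?_⟩
    have : f v * fi i x * (f v)⁻¹
        = fi i (v i) * (f (Function.update v i 1) * fi i x * (f (Function.update v i 1))⁻¹)
          * (fi i (v i))⁻¹ := by
      rw [hsplit]; group
    rw [map_mul, map_mul, map_inv, this, hcom.eq, mul_inv_cancel_right]
  have key : ∀ i j : Fin n, i ≠ j → (∀ x, fi i x = 1) ∨ (∀ y, fi j y = 1) := by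
    intro i j hij
    by_contra hcon
    push_neg at hcon
    obtain ⟨⟨x₀, hx₀⟩, ⟨y₀, hy₀⟩⟩ := hcon
    have htop : (fi i).range = ⊤ := by
      rcases Subgroup.Normal.eq_bot_or_eq_top (hrangenormal i) with hb | ht
      · exfalso
        have : fi i x₀ ∈ (fi i).range := ⟨x₀, rfl⟩
        rw [hb, Subgroup.mem_bot] at this
        exact hx₀ this
      · exact ht
    apply hy₀
    have hz : fi j y₀ ∈ Subgroup.center G := by
      refine Subgroup.mem_center_iff.mpr fun g => ?_
      have hg : g ∈ (fi i).range := by rw [htop]; trivial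
      obtain ⟨x', rfl⟩ := hg
      exact (hcomm i j hij x' y₀).eq
    rwa [hc, Subgroup.mem_bot] at hz
  by_cases hall : ∀ (i : Fin n) (x : G), fi i x = 1
  · exfalso
    have hf1 : f = 1 := by
      refine MonoidHom.pi_ext fun i x => ?_
      show fi i x = (1 : (Fin n → G) →* G) _
      rw [hall i x]; rfl
    obtain ⟨a, ha⟩ := exists_ne (1 : G)
    obtain ⟨v, hv⟩ := hf a
    rw [hf1] at hv
    exact ha hv.symm
  · push_neg at hall
    obtain ⟨i₀, x₀, hx₀⟩ := hall
    have hothers : ∀ j : Fin n, j ≠ i₀ → ∀ y, fi j y = 1 := by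
      intro j hj y
      rcases key i₀ j (Ne.symm hj) with h | h
      · exact absurd (h x₀) hx₀
      · exact h y
    have heval : ∀ v, f v = fi i₀ (v i₀) := by
      have : f = (fi i₀).comp (Pi.evalMonoidHom (fun _ : Fin n => G) i₀) := by
        refine MonoidHom.pi_ext fun j x => ?_
        rcases eq_or_ne j i₀ with rfl | hj
        · show fi j x = fi j _
          rw [Pi.evalMonoidHom_apply, Pi.mulSingle_eq_same]
        · show fi j x = fi i₀ _
          rw [Pi.evalMonoidHom_apply, Pi.mulSingle_eq_of_ne hj.symm, map_one, hothers j hj x]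
      intro v
      rw [this]; rfl
    have hsurj : Function.Surjective (fi i₀) := by
      intro b
      obtain ⟨v, hv⟩ := hf b
      exact ⟨v i₀, by rw [← heval v, hv]⟩
    have hinj : Function.Injective (fi i₀) := by
      have hker : (fi i₀).ker = ⊥ := by
        rcases Subgroup.Normal.eq_bot_or_eq_top (MonoidHom.normal_ker (fi i₀)) with hb | ht
        · exact hb
        · exfalso
          obtain ⟨a, ha⟩ := exists_ne (1 : G)
          obtain ⟨x, hx⟩ := hsurj a
          have : x ∈ (fi i₀).ker := by rw [ht]; trivial
          rw [MonoidHom.mem_ker] at this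
          rw [this] at hx
          exact ha hx.symm
      exact (MonoidHom.ker_eq_bot_iff _).mp hker
    exact ⟨i₀, MulEquiv.ofBijective (fi i₀) ⟨hinj, hsurj⟩, heval⟩

/-- restriction homomorphism dropping the last coordinate -/
def resHom (n : ℕ) : (Fin (n + 1) → G) →* (Fin n → G) where
  toFun v := v ∘ Fin.castSucc
  map_one' := rfl
  map_mul' _ _ := rfl

/-- inclusion of the last coordinate -/
def snocHom (n : ℕ) : G →* (Fin (n + 1) → G) where
  toFun g := Fin.snoc 1 g
  map_one' := by
    funext j
    refine Fin.lastCases ?_ (fun j => ?_) j <;> simp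
  map_mul' g h := by
    funext j
    refine Fin.lastCases ?_ (fun j => ?_) j <;> simp

lemma subdirect_eq_top (hc : Subgroup.center G = ⊥) (hs : IsSimpleGroup G) :
    ∀ {n : ℕ} (H : Subgroup (Fin n → G)),
    (∀ (i : Fin n) (a : G), ∃ h ∈ H, h i = a) →
    (∀ (i j : Fin n), i ≠ j → ∀ a b : G, ∃ h ∈ H, h i = a ∧ h j = b) →
    H = ⊤ := by
  haveI := hs
  intro n
  induction n with
  | zero =>
    intro H _ _
    refine (Subgroup.eq_top_iff' _).mpr fun v => ?_
    have : v = 1 := Subsingleton.elim v 1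
    rw [this]; exact H.one_mem
  | succ n ih =>
    intro H h1 h2
    classical
    have hH' : H.map (resHom n) = ⊤ := by
      refine ih _ (fun i a => ?_) (fun i j hij a b => ?_)
      · obtain ⟨h, hh, hha⟩ := h1 (Fin.castSucc i) a
        exact ⟨resHom n h, Subgroup.mem_map.mpr ⟨h, hh, rfl⟩, hha⟩
      · obtain ⟨h, hh, hha, hhb⟩ := h2 (Fin.castSucc i) (Fin.castSucc j)
          (fun e => hij (Fin.castSucc_injective n e)) a b
        exact ⟨resHom n h, Subgroup.mem_map.mpr ⟨h, hh, rfl⟩, hha, hhb⟩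
    have hres_surj : ∀ v : Fin n → G, ∃ h ∈ H, resHom n h = v := by
      intro v
      have : v ∈ H.map (resHom n) := by rw [hH']; trivial
      obtain ⟨h, hh, hhv⟩ := Subgroup.mem_map.mp this
      exact ⟨h, hh, hhv⟩
    set B : Subgroup G := H.comap (snocHom n) with hB
    have hBnormal : B.Normal := by
      constructor
      intro m hm t
      obtain ⟨h, hh, hht⟩ := h1 (Fin.last n) t
      have heq : snocHom n (t * m * t⁻¹) = h * snocHom n m * h⁻¹ := by
        funext j
        refine Fin.lastCases ?_ (fun j => ?_) j
        · simp [snocHom, hht]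
        · simp [snocHom]
      show snocHom n (t * m * t⁻¹) ∈ H
      rw [heq]
      exact H.mul_mem (H.mul_mem hh hm) (H.inv_mem hh)
    have hsnoc_res : ∀ h : Fin (n + 1) → G, resHom n h = 1 → h = snocHom n (h (Fin.last n)) := by
      intro h hres
      funext j
      refine Fin.lastCases ?_ (fun j => ?_) j
      · simp [snocHom]
      · have := congrFun hres j
        simp only [resHom, MonoidHom.coe_mk, OneHom.coe_mk, Function.comp_apply, Pi.one_apply] at this
        simp [snocHom, this]
    rcases Subgroup.Normal.eq_bot_or_eq_top hBnormal with hbot | htop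
    · -- last coordinate is a function of the rest; derive a contradiction
      exfalso
      have huniq : ∀ h h' : Fin (n+1) → G, h ∈ H → h' ∈ H → resHom n h = resHom n h' →
          h (Fin.last n) = h' (Fin.last n) := by
        intro h h' hh hh' hres
        have hmem : h * h'⁻¹ ∈ H := H.mul_mem hh (H.inv_mem hh')
        have hres1 : resHom n (h * h'⁻¹) = 1 := by
          rw [map_mul, map_inv, hres, mul_inv_cancel]
        have := hsnoc_res _ hres1
        have hmemB : (h * h'⁻¹) (Fin.last n) ∈ B := by
          show snocHom n _ ∈ H
          rw [← this]; exact hmem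
        rw [hbot, Subgroup.mem_bot] at hmemB
        have : h (Fin.last n) * (h' (Fin.last n))⁻¹ = 1 := hmemB
        rw [mul_inv_eq_one] at this
        exact this
      choose pick hpickH hpickres using hres_surj
      set F : (Fin n → G) →* G :=
        { toFun := fun v => pick v (Fin.last n)
          map_one' := by
            have := huniq (pick 1) 1 (hpickH 1) H.one_mem (by rw [hpickres, map_one])
            simpa using this
          map_mul' := by
            intro u v
            have hmem : pick u * pick v ∈ H := H.mul_mem (hpickH u) (hpickH v)
            have := huniq (pick (u * v)) (pick u * pick v) (hpickH (u*v)) hmem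
              (by rw [map_mul, hpickres, hpickres, hpickres])
            simpa using this } with hF
      have hFsurj : Function.Surjective F := by
        intro b
        obtain ⟨h, hh, hhb⟩ := h1 (Fin.last n) b
        refine ⟨resHom n h, ?_⟩
        have := huniq (pick (resHom n h)) h (hpickH _) hh (hpickres _)
        rw [← hhb]
        exact this
      obtain ⟨i₀, α, hα⟩ := hom_factor hc hs F hFsurj
      obtain ⟨b, hb⟩ := exists_ne (α 1)
      obtain ⟨h, hh, hha, hhb⟩ := h2 (Fin.castSucc i₀) (Fin.last n)
        (Fin.ne_last_of_lt (Fin.castSucc_lt_last i₀)) 1 b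
      have hlast : h (Fin.last n) = F (resHom n h) :=
        (huniq (pick (resHom n h)) h (hpickH _) hh (hpickres _)).symm
      rw [hα] at hlast
      have : (resHom n h) i₀ = 1 := hha
      rw [this] at hlast
      rw [hhb] at hlast
      exact hb hlast
    · -- B = ⊤ : conclude H = ⊤
      refine (Subgroup.eq_top_iff' _).mpr fun w => ?_
      obtain ⟨h, hh, hres⟩ := hres_surj (resHom n w)
      have hg : snocHom n (w (Fin.last n) * (h (Fin.last n))⁻¹) ∈ H := by
        have : (w (Fin.last n) * (h (Fin.last n))⁻¹) ∈ B := by rw [htop]; trivial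
        exact this
      have hw : w = snocHom n (w (Fin.last n) * (h (Fin.last n))⁻¹) * h := by
        funext j
        refine Fin.lastCases ?_ (fun j => ?_) j
        · simp [snocHom]
        · have := congrFun hres j
          simp only [resHom, MonoidHom.coe_mk, OneHom.coe_mk, Function.comp_apply] at this
          simp [snocHom, this]
      rw [hw]
      exact H.mul_mem hg hh

/-- pointwise action of `Aut(G)^n` on `G^n` -/
def ptwise {n : ℕ} : (Fin n → MulAut G) →* MulAut (Fin n → G) where
  toFun f := MulEquiv.piCongrRight f
  map_one' := MulEquiv.ext fun v => funext fun i => rfl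
  map_mul' f g := MulEquiv.ext fun v => funext fun i => rfl

def Wmap (n : ℕ) : Wreath (MulAut G) n →* MulAut (Fin n → G) :=
  SemidirectProduct.lift ptwise (permHom G n)
    (by
      intro σ
      refine MonoidHom.ext fun f => MulEquiv.ext fun v => funext fun i => ?_
      show f (σ.symm i) (v i)
        = (permAut G σ) ((ptwise f) (((permAut G σ))⁻¹ v)) i
      show f (σ.symm i) (v i) = f (σ.symm i) (v (σ (σ.symm i)))
      rw [Equiv.apply_symm_apply])

lemma Wmap_apply {n : ℕ} (w : Wreath (MulAut G) n) (v : Fin n → G) (i : Fin n) :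
    Wmap n w v i = w.left i (v (w.right.symm i)) := rfl

lemma Wmap_injective (hs : IsSimpleGroup G) (n : ℕ) :
    Function.Injective (Wmap (G := G) n) := by
  haveI := hs
  rw [injective_iff_map_eq_one]
  intro w hw
  have happ : ∀ (v : Fin n → G) (i : Fin n), w.left i (v (w.right.symm i)) = v i := by
    intro v i
    have := congrFun (MulEquiv.ext_iff.mp hw v) i
    exact this
  have hσ : w.right = 1 := by
    classical
    have hsymm : ∀ i, w.right.symm i = i := by
      intro i
      by_contra hne
      obtain ⟨g, hg⟩ := exists_ne (1 : G)
      have := happ (Pi.mulSingle i g) i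
      rw [Pi.mulSingle_eq_same, Pi.mulSingle_eq_of_ne hne, map_one] at this
      exact hg this.symm
    have : w.right.symm = 1 := Equiv.ext hsymm
    calc w.right = w.right.symm.symm := rfl
    _ = (1 : Equiv.Perm (Fin n)).symm := by rw [this]
    _ = 1 := rfl
  have hleft : w.left = 1 := by
    funext i
    refine MulEquiv.ext fun x => ?_
    have := happ (fun _ => x) i
    exact this
  ext
  · rw [hleft]; rfl
  · rw [hσ]; rfl

lemma Wmap_surjective (hc : Subgroup.center G = ⊥) (hs : IsSimpleGroup G) [Finite G] (n : ℕ) :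
    Function.Surjective (Wmap (G := G) n) := by
  haveI := hs
  classical
  intro φ
  have hmap : ∀ (ψ : MulAut (Fin n → G)) (i : Fin n),
      ∃ j, factorS n j ≤ (factorS n i).map ψ.toMonoidHom := by
    intro ψ i
    have hn : ((factorS (G := G) n i).map ψ.toMonoidHom).Normal :=
      (factorS_normal i).map _ ψ.surjective
    obtain ⟨g, hg⟩ := exists_ne (1 : G)
    have hvmem : ψ (Pi.mulSingle i g) ∈ (factorS (G := G) n i).map ψ.toMonoidHom :=
      Subgroup.mem_map.mpr ⟨Pi.mulSingle i g, ⟨g, rfl⟩, rfl⟩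
    have hv1 : ψ (Pi.mulSingle i g) ≠ 1 := by
      intro h
      apply hg
      have h2 : (Pi.mulSingle i g : Fin n → G) = 1 := by
        apply ψ.injective
        rw [h, map_one]
      have := congrFun h2 i
      rwa [Pi.mulSingle_eq_same] at this
    obtain ⟨j, hj⟩ := normal_contains_factor hc hs hn hvmem hv1
    refine ⟨j, ?_⟩
    rintro w ⟨g', rfl⟩
    exact hj g'
  have hperm : ∀ i : Fin n, ∃ j, (factorS (G := G) n i).map φ.toMonoidHom = factorS n j := by
    intro i
    obtain ⟨j, hj⟩ := hmap φ i
    obtain ⟨k, hk⟩ := hmap φ.symm j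
    have hmapmap : ∀ (S : Subgroup (Fin n → G)),
        (S.map φ.toMonoidHom).map φ.symm.toMonoidHom = S := by
      intro S
      rw [Subgroup.map_map]
      have : (φ.symm.toMonoidHom.comp φ.toMonoidHom) = MonoidHom.id _ := by
        refine MonoidHom.ext fun x => ?_
        simp
      rw [this, Subgroup.map_id]
    have h1 : factorS (G := G) n k ≤ factorS n i := by
      refine le_trans hk ?_
      have := Subgroup.map_mono (f := φ.symm.toMonoidHom) hj
      rwa [hmapmap] at this
    have hki : k = i := factorS_le_factorS hs h1
    subst hki
    have h2 : (factorS (G := G) n k).map φ.toMonoidHom ≤ factorS n j := by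
      have := Subgroup.map_mono (f := φ.toMonoidHom) hk
      rw [Subgroup.map_map] at this
      have hcomp : (φ.toMonoidHom.comp φ.symm.toMonoidHom) = MonoidHom.id _ := by
        refine MonoidHom.ext fun x => ?_
        simp
      rw [hcomp, Subgroup.map_id] at this
      exact this
    exact ⟨j, le_antisymm h2 hj⟩
  choose σ₀ hσ₀ using hperm
  have hσ₀inj : Function.Injective σ₀ := by
    intro i i' h
    have : (factorS (G := G) n i).map φ.toMonoidHom = (factorS n i').map φ.toMonoidHom := by
      rw [hσ₀, hσ₀, h]
    have heq : factorS (G := G) n i = factorS n i' :=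
      Subgroup.map_injective φ.injective this
    exact factorS_le_factorS hs (le_of_eq heq)
  have hσ₀bij := Finite.injective_iff_bijective.mp hσ₀inj
  set σ : Equiv.Perm (Fin n) := Equiv.ofBijective σ₀ hσ₀bij with hσdef
  set bi : ∀ _ : Fin n, G →* G := fun i =>
    (Pi.evalMonoidHom (fun _ : Fin n => G) (σ₀ i)).comp
      (φ.toMonoidHom.comp (MonoidHom.mulSingle (fun _ : Fin n => G) i)) with hbi
  have hkey : ∀ (i : Fin n) (g : G), φ (Pi.mulSingle i g) = Pi.mulSingle (σ₀ i) (bi i g) := by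
    intro i g
    have hmem : φ (Pi.mulSingle i g) ∈ factorS (G := G) n (σ₀ i) := by
      rw [← hσ₀ i]
      exact Subgroup.mem_map.mpr ⟨Pi.mulSingle i g, ⟨g, rfl⟩, rfl⟩
    have := single_of_eq_one (mem_factorS.mp hmem)
    exact this
  have hbiinj : ∀ i, Function.Injective (bi i) := by
    intro i g g' hgg'
    have h1 : φ (Pi.mulSingle i g) = φ (Pi.mulSingle i g') := by
      rw [hkey, hkey, hgg']
    have h2 := φ.injective h1
    have := congrFun h2 i
    rwa [Pi.mulSingle_eq_same, Pi.mulSingle_eq_same] at this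
  have hbibij : ∀ i, Function.Bijective (bi i) :=
    fun i => Finite.injective_iff_bijective.mp (hbiinj i)
  set β : ∀ _ : Fin n, MulAut G := fun i => MulEquiv.ofBijective (bi i) (hbibij i) with hβ
  refine ⟨⟨fun j => β (σ.symm j), σ⟩, ?_⟩
  have hhom : (Wmap n ⟨fun j => β (σ.symm j), σ⟩).toMonoidHom = φ.toMonoidHom := by
    refine MonoidHom.pi_ext fun i g => ?_
    show (Wmap n ⟨fun j => β (σ.symm j), σ⟩) (Pi.mulSingle i g) = φ (Pi.mulSingle i g)
    rw [hkey]
    funext j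
    rw [Wmap_apply]
    rcases eq_or_ne j (σ₀ i) with rfl | hj
    · have h1 : (σ.symm (σ₀ i)) = i := by
        show σ.symm (σ i) = i
        exact σ.symm_apply_apply i
      show β (σ.symm (σ₀ i)) ((Pi.mulSingle i g : Fin n → G) (σ.symm (σ₀ i)))
        = (Pi.mulSingle (σ₀ i) (bi i g) : Fin n → G) (σ₀ i)
      rw [h1, Pi.mulSingle_eq_same, Pi.mulSingle_eq_same]
      rfl
    · have h2 : σ.symm j ≠ i := by
        intro h
        apply hj
        rw [← h]
        show j = σ (σ.symm j)
        rw [σ.apply_symm_apply]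
      show β (σ.symm j) ((Pi.mulSingle i g : Fin n → G) (σ.symm j))
        = (Pi.mulSingle (σ₀ i) (bi i g) : Fin n → G) j
      rw [Pi.mulSingle_eq_of_ne hj, Pi.mulSingle_eq_of_ne h2, map_one]
  exact MulEquiv.toMonoidHom_injective hhom

noncomputable def WEquiv (hc : Subgroup.center G = ⊥) (hs : IsSimpleGroup G) [Finite G]
    (n : ℕ) : Wreath (MulAut G) n ≃* MulAut (Fin n → G) :=
  MulEquiv.ofBijective (Wmap n) ⟨Wmap_injective hs n, Wmap_surjective hc hs n⟩

def theta (n : ℕ) : Wreath (MulAut G) n →* Wreath (OutG G) n where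
  toFun w := ⟨fun i => OutMk (w.left i), w.right⟩
  map_one' := by
    refine SemidirectProduct.ext (funext fun i => ?_) rfl
    show OutMk (1 : MulAut G) = 1
    exact map_one _
  map_mul' a b := by
    refine SemidirectProduct.ext (funext fun i => ?_) rfl
    show OutMk (a.left i * b.left (a.right.symm i))
      = OutMk (a.left i) * OutMk (b.left (a.right.symm i))
    exact map_mul _ _ _

lemma theta_surjective (n : ℕ) : Function.Surjective (theta (G := G) n) := by
  rintro ⟨h, σ⟩
  refine ⟨⟨fun i => (h i).out, σ⟩, ?_⟩
  refine SemidirectProduct.ext (funext fun i => ?_) rfl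
  show OutMk ((h i).out) = h i
  exact QuotientGroup.out_eq' (h i)

lemma mem_ker_theta {n : ℕ} {w : Wreath (MulAut G) n} :
    w ∈ (theta (G := G) n).ker ↔ (∀ i, w.left i ∈ Inn G) ∧ w.right = 1 := by
  rw [MonoidHom.mem_ker]
  constructor
  · intro h
    have hl : ∀ i, OutMk (w.left i) = 1 :=
      fun i => congrFun (congrArg SemidirectProduct.left h) i
    have hr : w.right = 1 := congrArg SemidirectProduct.right h
    exact ⟨fun i => (QuotientGroup.eq_one_iff _).mp (hl i), hr⟩
  · rintro ⟨hl, hr⟩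
    refine SemidirectProduct.ext (funext fun i => ?_) hr
    show OutMk (w.left i) = 1
    exact (QuotientGroup.eq_one_iff _).mpr (hl i)

lemma Wmap_conj_eq {n : ℕ} (u : Fin n → G) (f : Fin n → MulAut G)
    (hf : ∀ i, MulAut.conj (u i) = f i) :
    Wmap n ⟨f, 1⟩ = MulAut.conj u := by
  refine MulEquiv.ext fun v => funext fun i => ?_
  show f i (v ((1 : Equiv.Perm (Fin n)).symm i)) = (MulAut.conj u v) i
  rw [show (1 : Equiv.Perm (Fin n)).symm i = i from rfl, ← hf i]
  show u i * v i * (u i)⁻¹ = (u * v * u⁻¹) i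
  rfl

lemma map_ker_theta (hc : Subgroup.center G = ⊥) (hs : IsSimpleGroup G) [Finite G] (n : ℕ) :
    ((theta (G := G) n).ker).map (WEquiv hc hs n) = Inn (Fin n → G) := by
  ext x
  constructor
  · rintro ⟨w, hw, rfl⟩
    obtain ⟨hl, hr⟩ := mem_ker_theta.mp hw
    choose u hu using fun i => hl i
    have hw1 : w = ⟨w.left, 1⟩ := SemidirectProduct.ext rfl hr
    refine ⟨u, ?_⟩
    show MulAut.conj u = WEquiv hc hs n w
    rw [hw1]
    exact (Wmap_conj_eq u w.left hu).symm
  · rintro ⟨u, rfl⟩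
    refine ⟨⟨fun i => MulAut.conj (u i), 1⟩,
      mem_ker_theta.mpr ⟨fun i => ⟨u i, rfl⟩, rfl⟩, ?_⟩
    exact Wmap_conj_eq u _ (fun _ => rfl)

noncomputable def OutWreathEquiv (hc : Subgroup.center G = ⊥) (hs : IsSimpleGroup G)
    [Finite G] (n : ℕ) : OutG (Fin n → G) ≃* Wreath (OutG G) n :=
  ((QuotientGroup.congr (theta (G := G) n).ker (Inn (Fin n → G)) (WEquiv hc hs n)
      (map_ker_theta hc hs n)).symm).trans
    (QuotientGroup.quotientKerEquivOfSurjective (theta n) (theta_surjective n))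

end Stmt15Aux

/-- For `G` finite, simple and non-abelian: (1) `Aut(G^r) ≅ Aut(G) ≀ S_r`;
(2) `Out(G^r) ≅ Out(G) ≀ S_r`; (3) the action of `Out(Ḡ)` on `𝒫_c` is faithful. -/
theorem stmt15 (G : Type) [Group G] [Finite G]
    (hsimple : IsSimpleGroup G) (hnonab : ∃ a b : G, a * b ≠ b * a)
    (r : ℕ) (rep : Fin r → G × G)
    (hrep : ∀ i, rep i ∈ GenPairs G)
    (hdist : ∀ i j : Fin r, (∃ α : MulAut G, (α (rep i).1, α (rep i).2) = rep j) → i = j)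
    (hcover : ∀ q ∈ GenPairs G, ∃ i : Fin r, ∃ α : MulAut G, (α (rep i).1, α (rep i).2) = q)
    (p : Fin r → (Gbar G →* G))
    (hp : ∀ i, p i (xbar G) = (rep i).1 ∧ p i (ybar G) = (rep i).2)
    (Φ : OutG (Gbar G) →* Equiv.Perm (PC G))
    (hΦ : IsPCAction G rep hrep p Φ) :
    Nonempty (MulAut (Fin r → G) ≃* Wreath (MulAut G) r) ∧
    Nonempty (OutG (Fin r → G) ≃* Wreath (OutG G) r) ∧
    Function.Injective Φ := by
  classical
  haveI := hsimple
  have hc : Subgroup.center G = ⊥ := Stmt15Aux.center_eq_bot hsimple hnonab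
  refine ⟨⟨(Stmt15Aux.WEquiv hc hsimple r).symm⟩, ⟨Stmt15Aux.OutWreathEquiv hc hsimple r⟩, ?_⟩
  -- generators of F2 and Gbar
  have hgenF : Subgroup.closure ({fx, fy} : Set F2) = ⊤ := by
    have hrange : ({fx, fy} : Set F2) = Set.range FreeGroup.of := by
      ext z
      simp only [Set.mem_insert_iff, Set.mem_singleton_iff, Set.mem_range]
      constructor
      · rintro (rfl | rfl)
        exacts [⟨true, rfl⟩, ⟨false, rfl⟩]
      · rintro ⟨(_ | _), rfl⟩
        · exact Or.inr rfl
        · exact Or.inl rfl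
    rw [hrange, FreeGroup.closure_range_of]
  have hgen : Subgroup.closure ({xbar G, ybar G} : Set (Gbar G)) = ⊤ := by
    have himg : ({xbar G, ybar G} : Set (Gbar G))
        = (QuotientGroup.mk' (NG G)) '' ({fx, fy} : Set F2) := by
      rw [Set.image_pair]; rfl
    rw [himg, ← MonoidHom.map_closure, hgenF]
    exact Subgroup.map_top_of_surjective _ (QuotientGroup.mk'_surjective _)
  have hext : ∀ {f g : Gbar G →* G}, f (xbar G) = g (xbar G) → f (ybar G) = g (ybar G) →
      f = g := by
    intro f g h1 h2
    refine MonoidHom.eq_of_eqOn_dense hgen ?_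
    intro z hz
    simp only [Set.mem_insert_iff, Set.mem_singleton_iff] at hz
    rcases hz with rfl | rfl
    · exact h1
    · exact h2
  have hpsurj : ∀ i, Function.Surjective (p i) := by
    intro i
    have hcl : Subgroup.closure ({(rep i).1, (rep i).2} : Set G) = ⊤ := hrep i
    have hle : Subgroup.closure ({(rep i).1, (rep i).2} : Set G) ≤ (p i).range := by
      rw [Subgroup.closure_le]
      intro z hz
      simp only [Set.mem_insert_iff, Set.mem_singleton_iff] at hz
      rcases hz with rfl | rfl
      · exact ⟨xbar G, (hp i).1⟩
      · exact ⟨ybar G, (hp i).2⟩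
    rw [hcl] at hle
    rw [← MonoidHom.range_eq_top]
    exact le_antisymm le_top hle
  have hfactor : ∀ f : Gbar G →* G, Function.Surjective f →
      ∃ (j : Fin r) (α : MulAut G), f = α.toMonoidHom.comp (p j) := by
    intro f hf
    have hpair : (f (xbar G), f (ybar G)) ∈ GenPairs G := by
      show Subgroup.closure {f (xbar G), f (ybar G)} = ⊤
      have himg : ({f (xbar G), f (ybar G)} : Set G) = f '' {xbar G, ybar G} := by
        rw [Set.image_pair]
      rw [himg, ← MonoidHom.map_closure, hgen]
      exact Subgroup.map_top_of_surjective _ hf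
    obtain ⟨j, α, hα⟩ := hcover _ hpair
    refine ⟨j, α, (hext ?_ ?_).symm⟩
    · show α (p j (xbar G)) = f (xbar G)
      rw [(hp j).1]
      exact congrArg Prod.fst hα
    · show α (p j (ybar G)) = f (ybar G)
      rw [(hp j).2]
      exact congrArg Prod.snd hα
  have hkerdist : ∀ i j : Fin r, (p i).ker = (p j).ker → i = j := by
    intro i j hker
    have htrans : ∀ z z' : Gbar G, p i z = p i z' → p j z = p j z' := by
      intro z z' h
      have hm : z * z'⁻¹ ∈ (p i).ker := by
        rw [MonoidHom.mem_ker, map_mul, map_inv, h, mul_inv_cancel]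
      rw [hker, MonoidHom.mem_ker, map_mul, map_inv, mul_inv_eq_one] at hm
      exact hm
    have htrans' : ∀ z z' : Gbar G, p j z = p j z' → p i z = p i z' := by
      intro z z' h
      have hm : z * z'⁻¹ ∈ (p j).ker := by
        rw [MonoidHom.mem_ker, map_mul, map_inv, h, mul_inv_cancel]
      rw [← hker, MonoidHom.mem_ker, map_mul, map_inv, mul_inv_eq_one] at hm
      exact hm
    have hsec : ∀ a, p i (Function.surjInv (hpsurj i) a) = a :=
      fun a => Function.surjInv_eq (hpsurj i) a
    set g1 : G →* G :=
      { toFun := fun a => p j (Function.surjInv (hpsurj i) a)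
        map_one' := by
          have h0 : p j (Function.surjInv (hpsurj i) 1) = p j 1 :=
            htrans _ _ (by rw [hsec, map_one])
          rwa [map_one] at h0
        map_mul' := by
          intro a b
          have h0 : p j (Function.surjInv (hpsurj i) (a * b))
              = p j (Function.surjInv (hpsurj i) a * Function.surjInv (hpsurj i) b) :=
            htrans _ _ (by rw [hsec, map_mul, hsec, hsec])
          rwa [map_mul] at h0 } with hg1
    have hg1p : ∀ z, g1 (p i z) = p j z := fun z => htrans _ _ (hsec _)
    have hg1inj : Function.Injective g1 := by
      intro a b hab
      obtain ⟨za, rfl⟩ := hpsurj i a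
      obtain ⟨zb, rfl⟩ := hpsurj i b
      rw [hg1p, hg1p] at hab
      exact htrans' _ _ hab
    have hg1surj : Function.Surjective g1 := by
      intro b
      obtain ⟨z, rfl⟩ := hpsurj j b
      exact ⟨p i z, hg1p z⟩
    refine hdist i j ⟨MulEquiv.ofBijective g1 ⟨hg1inj, hg1surj⟩, ?_⟩
    have h1 : g1 (rep i).1 = (rep j).1 := by
      rw [← (hp i).1, ← (hp j).1, hg1p]
    have h2 : g1 (rep i).2 = (rep j).2 := by
      rw [← (hp i).2, ← (hp j).2, hg1p]
    exact Prod.ext h1 h2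
  have heinj : ∀ z : Gbar G, (∀ i, p i z = 1) → z = 1 := by
    intro z hz
    obtain ⟨z₀, rfl⟩ := QuotientGroup.mk'_surjective (NG G) z
    have hmem : z₀ ∈ NG G := by
      rw [NG, Subgroup.mem_sInf]
      rintro N ⟨f, hfsurj, rfl⟩
      have hpair : (f fx, f fy) ∈ GenPairs G := by
        show Subgroup.closure {f fx, f fy} = ⊤
        have himg : ({f fx, f fy} : Set G) = f '' {fx, fy} := by rw [Set.image_pair]
        rw [himg, ← MonoidHom.map_closure, hgenF]
        exact Subgroup.map_top_of_surjective _ hfsurj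
      obtain ⟨i, α, hα⟩ := hcover _ hpair
      have hfeq : f = (α.toMonoidHom.comp (p i)).comp (QuotientGroup.mk' (NG G)) := by
        refine FreeGroup.ext_hom _ _ ?_
        intro b
        cases b
        · show f fy = α (p i (ybar G))
          rw [(hp i).2]
          exact (congrArg Prod.snd hα).symm
        · show f fx = α (p i (xbar G))
          rw [(hp i).1]
          exact (congrArg Prod.fst hα).symm
      rw [MonoidHom.mem_ker, hfeq]
      show α (p i ((QuotientGroup.mk' (NG G)) z₀)) = 1
      rw [hz i, map_one]
    exact (QuotientGroup.eq_one_iff _).mpr hmem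
  have hesurj : ∀ s : Fin r → G, ∃ u : Gbar G, ∀ i, p i u = s i := by
    set e : Gbar G →* (Fin r → G) :=
      { toFun := fun z i => p i z
        map_one' := by funext i; simp
        map_mul' := by intro a b; funext i; simp } with he
    have hM : ∀ i j : Fin r, ((p i).ker.map (p j) = ⊤) ∨ (p i).ker ≤ (p j).ker := by
      intro i j
      have hnormal : ((p i).ker.map (p j)).Normal :=
        (MonoidHom.normal_ker (p i)).map _ (hpsurj j)
      rcases Subgroup.Normal.eq_bot_or_eq_top hnormal with hb | ht
      · right
        intro c hc'
        rw [MonoidHom.mem_ker]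
        have hmm : p j c ∈ (p i).ker.map (p j) := ⟨c, hc', rfl⟩
        rwa [hb, Subgroup.mem_bot] at hmm
      · left; exact ht
    have hrange : e.range = ⊤ := by
      refine Stmt15Aux.subdirect_eq_top hc hsimple e.range ?_ ?_
      · intro i a
        obtain ⟨z, hzeq⟩ := hpsurj i a
        exact ⟨e z, ⟨z, rfl⟩, hzeq⟩
      · intro i j hij a b
        rcases hM i j with ht | hle
        · obtain ⟨z0, hz0⟩ := hpsurj i a
          have hbmem : (p j z0)⁻¹ * b ∈ (p i).ker.map (p j) := by rw [ht]; trivial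
          obtain ⟨cc, hcker, hcc⟩ := hbmem
          refine ⟨e (z0 * cc), ⟨z0 * cc, rfl⟩, ?_, ?_⟩
          · have hc1 : p i cc = 1 := hcker
            show p i (z0 * cc) = a
            rw [map_mul, hz0, hc1, mul_one]
          · show p j (z0 * cc) = b
            rw [map_mul, hcc, mul_inv_cancel_left]
        · rcases hM j i with ht' | hle'
          · obtain ⟨z0, hz0⟩ := hpsurj j b
            have hamem : (p i z0)⁻¹ * a ∈ (p j).ker.map (p i) := by rw [ht']; trivial
            obtain ⟨cc, hcker, hcc⟩ := hamem
            refine ⟨e (z0 * cc), ⟨z0 * cc, rfl⟩, ?_, ?_⟩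
            · show p i (z0 * cc) = a
              rw [map_mul, hcc, mul_inv_cancel_left]
            · have hc1 : p j cc = 1 := hcker
              show p j (z0 * cc) = b
              rw [map_mul, hz0, hc1, mul_one]
          · exact absurd (hkerdist i j (le_antisymm hle hle')) hij
    intro s
    have hs : s ∈ e.range := by rw [hrange]; trivial
    obtain ⟨u, hu⟩ := hs
    exact ⟨u, fun i => congrFun hu i⟩
  -- part 3: injectivity
  rw [injective_iff_map_eq_one]
  intro q hq
  obtain ⟨φ, rfl⟩ := QuotientGroup.mk'_surjective (Inn (Gbar G)) q
  have hstep : ∀ i : Fin r, ∃ (j : Fin r) (β : MulAut G),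
      (p i).comp φ.toMonoidHom = β.toMonoidHom.comp (p j) := by
    intro i
    have hsurj : Function.Surjective ((p i).comp φ.toMonoidHom) :=
      (hpsurj i).comp φ.surjective
    obtain ⟨j, β, hβ⟩ := hfactor _ hsurj
    exact ⟨j, β, hβ⟩
  choose τ βf hτ using hstep
  have hτinj : Function.Injective τ := by
    intro i i' h
    have hz : ∀ z, p i' z = (βf i' * (βf i)⁻¹) (p i z) := by
      intro z
      obtain ⟨w, rfl⟩ := φ.surjective z
      have e1 : p i (φ w) = βf i (p (τ i) w) := DFunLike.congr_fun (hτ i) w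
      have e2 : p i' (φ w) = βf i' (p (τ i') w) := DFunLike.congr_fun (hτ i') w
      rw [e2, ← h]
      show βf i' (p (τ i) w) = (βf i' * (βf i)⁻¹) (p i (φ w))
      rw [e1]
      show βf i' (p (τ i) w) = βf i' ((βf i)⁻¹ (βf i (p (τ i) w)))
      rw [show (βf i)⁻¹ (βf i (p (τ i) w)) = p (τ i) w from (βf i).symm_apply_apply _]
    refine hdist i i' ⟨βf i' * (βf i)⁻¹, ?_⟩
    have h1 : (βf i' * (βf i)⁻¹) (rep i).1 = (rep i').1 := by
      rw [← (hp i).1, ← hz (xbar G), (hp i').1]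
    have h2 : (βf i' * (βf i)⁻¹) (rep i).2 = (rep i').2 := by
      rw [← (hp i).2, ← hz (ybar G), (hp i').2]
    exact Prod.ext h1 h2
  have hτbij := Finite.injective_iff_bijective.mp hτinj
  set ε : Equiv.Perm (Fin r) := Equiv.ofBijective τ hτbij with hε
  set σ : Equiv.Perm (Fin r) := ε.symm with hσ
  set ψ : Fin r → MulAut G := fun i => βf (σ i) with hψ
  have hcompat : ∀ i, (p (σ i)).comp φ.toMonoidHom = (ψ i).toMonoidHom.comp (p i) := by
    intro i
    have := hτ (σ i)
    have hτσ : τ (σ i) = i := ε.apply_symm_apply i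
    rw [hτσ] at this
    exact this
  have happly := hΦ φ σ ψ hcompat 1
  have hq' : Φ (OutMk φ) = 1 := hq
  have hfix : ∀ i, pcMk (rep i) (hrep i) = pcMkA (ψ i)⁻¹ (rep (σ i)) (hrep (σ i)) := by
    intro i
    have h1 := happly i
    rw [hq', one_mul] at h1
    simp only [Equiv.Perm.coe_one, id_eq] at h1
    rw [← h1]
    show pcMk (rep i) (hrep i) = (1 : MulAut G) • pcMk (rep i) (hrep i)
    rw [one_smul]
  have hinner : ∀ i, σ i = i ∧ ∃ t : G, ψ i = (MulAut.conj t)⁻¹ := by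
    intro i
    have h1 := hfix i
    have h2 : (pairSetoid G).r ⟨rep i, hrep i⟩ (autPair (ψ i)⁻¹ ⟨rep (σ i), hrep (σ i)⟩) :=
      Quotient.exact h1
    obtain ⟨t, ht1, ht2⟩ := h2
    have hδ1 : (ψ i * MulAut.conj t) (rep i).1 = (rep (σ i)).1 := by
      show ψ i (MulAut.conj t (rep i).1) = (rep (σ i)).1
      rw [MulAut.conj_apply, ht1]
      exact (ψ i).apply_symm_apply _
    have hδ2 : (ψ i * MulAut.conj t) (rep i).2 = (rep (σ i)).2 := by
      show ψ i (MulAut.conj t (rep i).2) = (rep (σ i)).2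
      rw [MulAut.conj_apply, ht2]
      exact (ψ i).apply_symm_apply _
    have hσi : i = σ i := hdist i (σ i) ⟨ψ i * MulAut.conj t, Prod.ext hδ1 hδ2⟩
    refine ⟨hσi.symm, t, ?_⟩
    have hδ1' : (ψ i * MulAut.conj t) (rep i).1 = (rep i).1 := by rw [hδ1, ← hσi]
    have hδ2' : (ψ i * MulAut.conj t) (rep i).2 = (rep i).2 := by rw [hδ2, ← hσi]
    have hhom : (ψ i * MulAut.conj t).toMonoidHom = MonoidHom.id G := by
      refine MonoidHom.eq_of_eqOn_dense (hrep i) ?_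
      intro z hz
      simp only [Set.mem_insert_iff, Set.mem_singleton_iff] at hz
      rcases hz with rfl | rfl
      · exact hδ1'
      · exact hδ2'
    have hone : ψ i * MulAut.conj t = 1 := by
      refine MulEquiv.ext fun x => ?_
      exact DFunLike.congr_fun hhom x
    exact eq_inv_of_mul_eq_one_left hone
  have hconjform : ∀ i, ∃ s : G, ∀ z, p i (φ z) = s * p i z * s⁻¹ := by
    intro i
    obtain ⟨hσi, t, hψt⟩ := hinner i
    refine ⟨t⁻¹, fun z => ?_⟩
    have hcz := DFunLike.congr_fun (hcompat i) z
    rw [hσi] at hcz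
    have hcz' : p i (φ z) = ψ i (p i z) := hcz
    rw [hcz', hψt]
    show ((MulAut.conj t)⁻¹) (p i z) = t⁻¹ * p i z * t⁻¹⁻¹
    rw [MulAut.conj_inv_apply, inv_inv]
  choose sfun hsfun using hconjform
  obtain ⟨u, hu⟩ := hesurj sfun
  have hφeq : ∀ z, φ z = u * z * u⁻¹ := by
    intro z
    have hz : ∀ i, p i (φ z * (u * z * u⁻¹)⁻¹) = 1 := by
      intro i
      rw [map_mul, map_inv, hsfun i z, map_mul, map_mul, map_inv, hu i]
      group
    have h0 := heinj _ hz
    rwa [mul_inv_eq_one] at h0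
  have hmem : φ ∈ Inn (Gbar G) := by
    refine ⟨u, ?_⟩
    refine MulEquiv.ext fun z => ?_
    rw [MulAut.conj_apply, hφeq]
  exact (QuotientGroup.eq_one_iff _).mpr hmem
end

section
/- Let G be a finite group, let H be the subgroup of Sym(𝒫_c) generated by the image of the Out(G)-action together with the permutations θ̄ and δ̄, let m be the largest cardinality of a conjugacy class of G, and let Z be the centre of G. Then 𝒮(G) is isomorphic to a finite direct product of wreath products E_k ≀ S_{r_k} (the semidirect product of E_k^{r_k} by the symmetric group S_{r_k} permuting the factors), where each E_k is a subquotient of H (a quotient of a subgroup of H), Σ_k r_k = r, and each r_k satisfies r_k ≤ |Z|·m²/|G|. -/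
/-- Swapping the two entries of a generating pair. -/
def swapPair {G : Type} [Group G] (p : ↥(GenPairs G)) : ↥(GenPairs G) :=
  ⟨((p : G × G).2, (p : G × G).1), by
    have hp : Subgroup.closure {(p : G × G).1, (p : G × G).2} = ⊤ := p.2
    show Subgroup.closure {(p : G × G).2, (p : G × G).1} = ⊤
    rwa [Set.pair_comm]⟩

/-- The permutation `θ̄` of `𝒫_c`, given by `[g,h]_c ↦ [h,g]_c`. -/
def thetaBar (G : Type) [Group G] : Equiv.Perm (PC G) :=
  Function.Involutive.toPerm
    (Quotient.map swapPair (by rintro p q ⟨t, h1, h2⟩; exact ⟨t, h2, h1⟩))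
    (by intro z; induction z using Quotient.ind; rfl)

/-- The map `(g,h) ↦ (h⁻¹g⁻¹, h)` on generating pairs. -/
def deltaPair {G : Type} [Group G] (p : ↥(GenPairs G)) : ↥(GenPairs G) :=
  ⟨((p : G × G).2⁻¹ * (p : G × G).1⁻¹, (p : G × G).2), by
    have hp : Subgroup.closure {(p : G × G).1, (p : G × G).2} = ⊤ := p.2
    show Subgroup.closure {(p : G × G).2⁻¹ * (p : G × G).1⁻¹, (p : G × G).2} = ⊤
    rw [eq_top_iff, ← hp]
    refine (Subgroup.closure_le _).mpr ?_
    have hb : (p : G × G).2 ∈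
        Subgroup.closure ({(p : G × G).2⁻¹ * (p : G × G).1⁻¹, (p : G × G).2} : Set G) :=
      Subgroup.subset_closure (by simp)
    have hc : (p : G × G).2⁻¹ * (p : G × G).1⁻¹ ∈
        Subgroup.closure ({(p : G × G).2⁻¹ * (p : G × G).1⁻¹, (p : G × G).2} : Set G) :=
      Subgroup.subset_closure (by simp)
    have ha : (p : G × G).1 ∈
        Subgroup.closure ({(p : G × G).2⁻¹ * (p : G × G).1⁻¹, (p : G × G).2} : Set G) := by
      have := Subgroup.inv_mem _ (Subgroup.mul_mem _ hb hc)
      simpa [mul_assoc] using this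
    rintro z hz
    rcases hz with rfl | rfl
    · exact ha
    · exact hb⟩

/-- The permutation `δ̄` of `𝒫_c`, given by `[g,h]_c ↦ [h⁻¹g⁻¹,h]_c`. -/
def deltaBar (G : Type) [Group G] : Equiv.Perm (PC G) :=
  Function.Involutive.toPerm
    (Quotient.map deltaPair (by
      rintro p q ⟨t, h1, h2⟩
      refine ⟨t, ?_, h2⟩
      show t * ((p : G × G).2⁻¹ * (p : G × G).1⁻¹) * t⁻¹ = (q : G × G).2⁻¹ * (q : G × G).1⁻¹
      rw [← h1, ← h2]; group))
    (by
      intro z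
      induction z using Quotient.ind with
      | _ p =>
        apply Quotient.sound
        refine ⟨(p : G × G).2, ?_, ?_⟩
        · show (p : G × G).2 * ((p : G × G).2⁻¹ * ((p : G × G).2⁻¹ * (p : G × G).1⁻¹)⁻¹) *
            (p : G × G).2⁻¹ = (p : G × G).1
          group
        · show (p : G × G).2 * (p : G × G).2 * (p : G × G).2⁻¹ = (p : G × G).2
          group)

/-- The relation on `𝒫_c` of being `(G×G)`-related: `[a₁,b₁]_c` and `[a₂,b₂]_c` are related
when `a₁` is conjugate to `a₂` and `b₁` is conjugate to `b₂`. -/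
def pcRel {G : Type} [Group G] : PC G → PC G → Prop :=
  Quotient.lift₂
    (fun p q => IsConj (p : G × G).1 (q : G × G).1 ∧ IsConj (p : G × G).2 (q : G × G).2)
    (by
      rintro p q p' q' ⟨t, h1, h2⟩ ⟨u, h3, h4⟩
      have hp1 : IsConj (p : G × G).1 (p' : G × G).1 := isConj_iff.mpr ⟨t, h1⟩
      have hp2 : IsConj (p : G × G).2 (p' : G × G).2 := isConj_iff.mpr ⟨t, h2⟩
      have hq1 : IsConj (q : G × G).1 (q' : G × G).1 := isConj_iff.mpr ⟨u, h3⟩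
      have hq2 : IsConj (q : G × G).2 (q' : G × G).2 := isConj_iff.mpr ⟨u, h4⟩
      rw [eq_iff_iff]
      constructor
      · rintro ⟨ha, hb⟩
        exact ⟨(hp1.symm.trans ha).trans hq1, (hp2.symm.trans hb).trans hq2⟩
      · rintro ⟨ha, hb⟩
        exact ⟨(hp1.trans ha).trans hq1.symm, (hp2.trans hb).trans hq2.symm⟩)

/-- The group `𝒮(G)`: permutations of `𝒫_c` preserving the `(G×G)`-relation and commuting
with `θ̄`, `δ̄` and the action of `Out(G)`. -/
def SG (G : Type) [Group G] : Subgroup (Equiv.Perm (PC G)) where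
  carrier := {π | (∀ z, pcRel z (π z)) ∧ Commute π (thetaBar G) ∧ Commute π (deltaBar G) ∧
    ∀ (α : MulAut G) (z : PC G), π (α • z) = α • (π z)}
  one_mem' := by
    have hrefl : ∀ z : PC G, pcRel z z := fun z =>
      Quotient.inductionOn z (fun p => ⟨IsConj.refl _, IsConj.refl _⟩)
    exact ⟨fun z => hrefl z, Commute.one_left _, Commute.one_left _, fun α z => rfl⟩
  mul_mem' := by
    rintro π ρ ⟨hY1, ht1, hd1, ha1⟩ ⟨hY2, ht2, hd2, ha2⟩
    have htrans : ∀ a b c : PC G, pcRel a b → pcRel b c → pcRel a c := fun a b c =>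
      Quotient.inductionOn₃ a b c
        (fun p q s h1 h2 => ⟨h1.1.trans h2.1, h1.2.trans h2.2⟩)
    refine ⟨fun z => htrans _ _ _ (hY2 z) (hY1 (ρ z)), Commute.mul_left ht1 ht2,
      Commute.mul_left hd1 hd2, fun α z => ?_⟩
    show π (ρ (α • z)) = α • π (ρ z)
    rw [ha2, ha1]
  inv_mem' := by
    rintro π ⟨hY, ht, hd, ha⟩
    have hsymm : ∀ a b : PC G, pcRel a b → pcRel b a := fun a b =>
      Quotient.inductionOn₂ a b (fun p q h => ⟨h.1.symm, h.2.symm⟩)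
    refine ⟨fun z => ?_, ht.inv_left, hd.inv_left, fun α z => ?_⟩
    · have h2 := hY (π⁻¹ z)
      rw [Equiv.Perm.coe_inv, Equiv.apply_symm_apply] at h2
      exact hsymm _ _ h2
    · apply π.injective
      show π (π⁻¹ (α • z)) = π (α • π⁻¹ z)
      rw [Equiv.Perm.coe_inv, Equiv.apply_symm_apply, ha, Equiv.apply_symm_apply]

/-- The subgroup `H` of `Sym(𝒫_c)` generated by the image of the `Out(G)`-action together
with `θ̄` and `δ̄`. -/
def Hgrp (G : Type) [Group G] : Subgroup (Equiv.Perm (PC G)) :=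
  Subgroup.closure
    ({thetaBar G, deltaBar G} ∪ Set.range (MulAction.toPermHom (MulAut G) (PC G)))

theorem Equiv.Perm.apply_inv_self {α : Type} (f : Equiv.Perm α) (x : α) : f (f⁻¹ x) = x :=
  f.apply_symm_apply x

namespace Stmt16
set_option linter.unusedSectionVars false
set_option linter.unusedVariables false
open MulAction

noncomputable section
open Classical

variable {G : Type} [Group G] [Finite G]

instance : Finite (PC G) := Quotient.finite _

abbrev Hg (G : Type) [Group G] := ↥(Hgrp G)

lemma pcRel_refl (z : PC G) : pcRel z z :=
  Quotient.inductionOn z fun _ => ⟨IsConj.refl _, IsConj.refl _⟩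

lemma pcRel_symm : ∀ {z w : PC G}, pcRel z w → pcRel w z := fun {z w} =>
  Quotient.inductionOn₂ z w (fun _ _ h => ⟨h.1.symm, h.2.symm⟩)

lemma pcRel_trans : ∀ {a b c : PC G}, pcRel a b → pcRel b c → pcRel a c := fun {a b c} =>
  Quotient.inductionOn₃ a b c (fun _ _ _ h1 h2 => ⟨h1.1.trans h2.1, h1.2.trans h2.2⟩)

lemma theta_mem : thetaBar G ∈ Hgrp G :=
  Subgroup.subset_closure (Or.inl (Set.mem_insert _ _))

lemma delta_mem : deltaBar G ∈ Hgrp G :=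
  Subgroup.subset_closure (Or.inl (Set.mem_insert_of_mem _ rfl))

lemma aperm_mem (α : MulAut G) : MulAction.toPermHom (MulAut G) (PC G) α ∈ Hgrp G :=
  Subgroup.subset_closure (Or.inr ⟨α, rfl⟩)

lemma hg_smul_def (h : Hg G) (z : PC G) : h • z = (h : Equiv.Perm (PC G)) z := rfl

lemma smul_fix_iff (h h0 : Hg G) (x : PC G) :
    h • h0 • x = h0 • x ↔ (h0⁻¹ * h * h0) • x = x := by
  rw [mul_assoc, mul_smul h0⁻¹ (h * h0), inv_smul_eq_iff, mul_smul]

/-- `Rel x y`: sending `h • x ↦ h • y` is a well-defined `H`-equivariant bijection between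
the orbits of `x` and `y` with each point `(G×G)`-related to its image. -/
def Rel (x y : PC G) : Prop :=
  (∀ h : Hg G, h • x = x ↔ h • y = y) ∧ ∀ h : Hg G, pcRel (h • x) (h • y)

lemma Rel.refl (x : PC G) : Rel x x := ⟨fun _ => Iff.rfl, fun _ => pcRel_refl _⟩

lemma Rel.symm {x y : PC G} (h : Rel x y) : Rel y x :=
  ⟨fun g => (h.1 g).symm, fun g => pcRel_symm (h.2 g)⟩

lemma Rel.trans {x y z : PC G} (h1 : Rel x y) (h2 : Rel y z) : Rel x z :=
  ⟨fun g => (h1.1 g).trans (h2.1 g), fun g => pcRel_trans (h1.2 g) (h2.2 g)⟩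

lemma Rel.pcRel {x y : PC G} (h : Rel x y) : pcRel x y := by
  have := h.2 1; rwa [one_smul, one_smul] at this

lemma Rel.smul {x y : PC G} (h0 : Hg G) (hr : Rel x y) : Rel (h0 • x) (h0 • y) := by
  constructor
  · intro h
    rw [smul_fix_iff, smul_fix_iff]
    exact hr.1 _
  · intro h
    rw [← mul_smul, ← mul_smul]
    exact hr.2 _

lemma Rel.smul_eq {x y : PC G} (hr : Rel x y) {h h' : Hg G} (he : h • x = h' • x) :
    h • y = h' • y := by
  have h1 : (h'⁻¹ * h) • x = x := by rw [mul_smul, he, inv_smul_smul]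
  have h2 := (hr.1 _).mp h1
  rwa [mul_smul, inv_smul_eq_iff] at h2

/-- Orbit-level version of `Rel`. -/
def RelOrb (x y : PC G) : Prop := ∃ h : Hg G, Rel x (h • y)

lemma RelOrb.refl (x : PC G) : RelOrb x x := ⟨1, by rw [one_smul]; exact Rel.refl x⟩

lemma RelOrb.symm {x y : PC G} : RelOrb x y → RelOrb y x := by
  rintro ⟨h, hr⟩
  exact ⟨h⁻¹, by have := hr.symm.smul h⁻¹; rwa [inv_smul_smul] at this⟩

lemma RelOrb.trans {x y z : PC G} : RelOrb x y → RelOrb y z → RelOrb x z := by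
  rintro ⟨h, h1⟩ ⟨u, h2⟩
  refine ⟨h * u, h1.trans ?_⟩
  have := h2.smul h
  rwa [← mul_smul] at this

lemma RelOrb.of_rel {x y : PC G} (h : Rel x y) : RelOrb x y :=
  ⟨1, by rwa [one_smul]⟩

lemma RelOrb.of_orbit {x y : PC G} (h : x ∈ orbit (Hg G) y) : RelOrb x y := by
  obtain ⟨g, rfl⟩ := mem_orbit_iff.mp h
  exact ⟨g, Rel.refl _⟩

variable (G)

/-- The orbit setoid on `𝒫_c` for the action of `H`. -/
def QS : Setoid (PC G) := MulAction.orbitRel (Hg G) (PC G)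

/-- The set of `H`-orbits. -/
def QT := Quotient (QS G)

instance : Finite (QT G) := Quotient.finite _
instance : Fintype (QT G) := Fintype.ofFinite _

/-- The setoid of `RelOrb`-equivalence on `H`-orbits. -/
def S2 : Setoid (QT G) :=
  ⟨fun q q' => RelOrb q.out q'.out,
    ⟨fun _ => RelOrb.refl _, RelOrb.symm, RelOrb.trans⟩⟩

/-- Equivalence classes of `H`-orbits. -/
def QT2 := Quotient (S2 G)

instance : Finite (QT2 G) := Quotient.finite _
instance : Fintype (QT2 G) := Fintype.ofFinite _

/-- Number of equivalence classes of `H`-orbits. -/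
def tt : ℕ := Fintype.card (QT2 G)

/-- Enumeration of the classes of `H`-orbits. -/
def e2 : QT2 G ≃ Fin (tt G) := Fintype.equivFin _

/-- The orbits in the `k`-th class. -/
def fib (k : Fin (tt G)) := {q : QT G // Quotient.mk (S2 G) q = (e2 G).symm k}

instance (k : Fin (tt G)) : Finite (fib G k) :=
  inferInstanceAs (Finite {q : QT G // Quotient.mk (S2 G) q = (e2 G).symm k})
instance (k : Fin (tt G)) : Fintype (fib G k) := Fintype.ofFinite _

/-- The number of orbits in the `k`-th class. -/
def ss (k : Fin (tt G)) : ℕ := Fintype.card (fib G k)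

/-- Enumeration of the orbits in the `k`-th class. -/
def efib (k : Fin (tt G)) : fib G k ≃ Fin (ss G k) := Fintype.equivFin _

/-- A base point for the `k`-th class. -/
def bb (k : Fin (tt G)) : PC G := ((e2 G).symm k).out.out

lemma relOrb_b (k : Fin (tt G)) (j : Fin (ss G k)) :
    RelOrb (bb G k) (((efib G k).symm j).val.out) := by
  have hq : Quotient.mk (S2 G) ((efib G k).symm j).val = (e2 G).symm k := ((efib G k).symm j).2
  have h2 : Quotient.mk (S2 G) ((efib G k).symm j).val
      = Quotient.mk (S2 G) ((e2 G).symm k).out := by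
    rw [hq]; exact (Quotient.out_eq _).symm
  exact (Quotient.exact h2).symm

/-- Representative points, one for each orbit, chosen `Rel`-linked to the base point of
their class. -/
def ww (k : Fin (tt G)) (j : Fin (ss G k)) : PC G :=
  (relOrb_b G k j).choose • (((efib G k).symm j).val.out)

lemma rel_bw (k : Fin (tt G)) (j : Fin (ss G k)) : Rel (bb G k) (ww G k j) :=
  (relOrb_b G k j).choose_spec

lemma ww_mk (k : Fin (tt G)) (j : Fin (ss G k)) :
    Quotient.mk (QS G) (ww G k j) = ((efib G k).symm j).val := by
  have h1 : Quotient.mk (QS G) (ww G k j)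
      = Quotient.mk (QS G) ((((efib G k).symm j).val).out) :=
    Quotient.sound (mem_orbit _ _)
  rw [h1]; exact Quotient.out_eq _

lemma cover (z : PC G) : ∃ k j, z ∈ orbit (Hg G) (ww G k j) := by
  set q := Quotient.mk (QS G) z with hqdef
  set k := (e2 G) (Quotient.mk (S2 G) q) with hkdef
  have hq : Quotient.mk (S2 G) q = (e2 G).symm k := by exact ((e2 G).symm_apply_apply _).symm
  refine ⟨k, efib G k ⟨q, hq⟩, ?_⟩
  have h1 : Quotient.mk (QS G) (ww G k (efib G k ⟨q, hq⟩)) = Quotient.mk (QS G) z := by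
    rw [ww_mk]; exact congrArg Subtype.val ((efib G k).symm_apply_apply _)
  exact Quotient.exact h1.symm

lemma uniq {k k' : Fin (tt G)} {j : Fin (ss G k)} {j' : Fin (ss G k')}
    (h : Quotient.mk (QS G) (ww G k j) = Quotient.mk (QS G) (ww G k' j')) :
    (⟨k, j⟩ : Σ k, Fin (ss G k)) = ⟨k', j'⟩ := by
  rw [ww_mk, ww_mk] at h
  have hk : k = k' := by
    have h2 := ((efib G k).symm j).2
    have h3 := ((efib G k').symm j').2
    rw [h, h3] at h2
    exact (e2 G).symm.injective h2.symm
  subst hk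
  have : (efib G k).symm j = (efib G k).symm j' := Subtype.ext h
  rw [Sigma.mk.inj_iff]
  exact ⟨rfl, heq_of_eq ((efib G k).symm.injective this)⟩

lemma uniq' {k k' : Fin (tt G)} {j : Fin (ss G k)} {j' : Fin (ss G k')} {z : PC G}
    (h1 : z ∈ orbit (Hg G) (ww G k j)) (h2 : z ∈ orbit (Hg G) (ww G k' j')) :
    (⟨k, j⟩ : Σ k, Fin (ss G k)) = ⟨k', j'⟩ := by
  apply uniq
  exact (Quotient.sound h1).symm.trans (Quotient.sound h2)

lemma classP3 {k k' : Fin (tt G)} {j : Fin (ss G k)} {j' : Fin (ss G k')} {y : PC G}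
    (hy : y ∈ orbit (Hg G) (ww G k' j')) (hr : Rel (ww G k j) y) : k = k' := by
  have h1 : RelOrb (bb G k) (bb G k') := by
    refine (RelOrb.of_rel (rel_bw G k j)).trans ((RelOrb.of_rel hr).trans ?_)
    exact (RelOrb.of_orbit hy).trans (RelOrb.of_rel (rel_bw G k' j')).symm
  have h2 : Quotient.mk (S2 G) ((e2 G).symm k).out = Quotient.mk (S2 G) ((e2 G).symm k').out :=
    Quotient.sound h1
  replace h2 := (Quotient.out_eq _).symm.trans (h2.trans (Quotient.out_eq _))
  exact (e2 G).symm.injective h2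

end
end Stmt16
namespace Stmt16
set_option linter.unusedSectionVars false
open MulAction

noncomputable section
open Classical

variable {G : Type} [Group G] [Finite G]

variable (G)

/-- The index of the orbit of `z`. -/
def idx (z : PC G) : Σ k, Fin (ss G k) :=
  ⟨(cover G z).choose, (cover G z).choose_spec.choose⟩

lemma idx_mem (z : PC G) : z ∈ orbit (Hg G) (ww G (idx G z).1 (idx G z).2) :=
  (cover G z).choose_spec.choose_spec

/-- A witness moving the orbit representative to `z`. -/
def wit (z : PC G) : Hg G := (mem_orbit_iff.mp (idx_mem G z)).choose

lemma wit_spec (z : PC G) : wit G z • ww G (idx G z).1 (idx G z).2 = z :=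
  (mem_orbit_iff.mp (idx_mem G z)).choose_spec

/-- A witness exhibiting `y` in the orbit of the base point `bb G k`. -/
def wit2 (k : Fin (tt G)) (y : PC G) : Hg G :=
  if h : y ∈ orbit (Hg G) (bb G k) then (mem_orbit_iff.mp h).choose else 1

lemma wit2_spec (k : Fin (tt G)) {y : PC G} (h : y ∈ orbit (Hg G) (bb G k)) :
    wit2 G k y • bb G k = y := by
  rw [wit2, dif_pos h]
  exact (mem_orbit_iff.mp h).choose_spec

/-- Transfer from the base orbit of class `k` to the `j`-th orbit of class `k`. -/
def push (k : Fin (tt G)) (j : Fin (ss G k)) (y : PC G) : PC G :=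
  wit2 G k y • ww G k j

/-- Transfer from the orbit of `z` back to the base orbit of its class. -/
def pull (z : PC G) : PC G := wit G z • bb G (idx G z).1

lemma push_apply (k : Fin (tt G)) (j : Fin (ss G k)) (h : Hg G) :
    push G k j (h • bb G k) = h • ww G k j := by
  have hm : h • bb G k ∈ orbit (Hg G) (bb G k) := mem_orbit _ _
  exact (rel_bw G k j).smul_eq (wit2_spec G k hm)

lemma push_smul (k : Fin (tt G)) (j : Fin (ss G k)) {y : PC G}
    (hy : y ∈ orbit (Hg G) (bb G k)) (h : Hg G) :
    push G k j (h • y) = h • push G k j y := by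
  obtain ⟨u, rfl⟩ := mem_orbit_iff.mp hy
  rw [smul_smul, push_apply, push_apply, mul_smul]

lemma idx_w (k : Fin (tt G)) (j : Fin (ss G k)) (h : Hg G) :
    idx G (h • ww G k j) = ⟨k, j⟩ := by
  have h1 := idx_mem G (h • ww G k j)
  have h2 : h • ww G k j ∈ orbit (Hg G) (ww G k j) := mem_orbit _ _
  have := uniq' G h1 h2
  rw [← this]

lemma pull_w (k : Fin (tt G)) (j : Fin (ss G k)) (h : Hg G) :
    pull G (h • ww G k j) = h • bb G k := by
  have hw := wit_spec G (h • ww G k j)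
  rw [pull]
  rw [idx_w] at hw ⊢
  exact (rel_bw G k j).symm.smul_eq hw

/-- The group `E_k`: `H`-equivariant permutations preserving each `(G×G)`-class, supported
on the base orbit of class `k`. -/
def Ek (k : Fin (tt G)) : Subgroup (Equiv.Perm (PC G)) where
  carrier := {e | (∀ (h : Hg G) (z : PC G), e (h • z) = h • e z) ∧ (∀ z, pcRel z (e z)) ∧
    ∀ z ∉ orbit (Hg G) (bb G k), e z = z}
  one_mem' := ⟨fun _ _ => rfl, fun z => pcRel_refl z, fun _ _ => rfl⟩
  mul_mem' := by
    rintro e f ⟨he1, he2, he3⟩ ⟨hf1, hf2, hf3⟩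
    refine ⟨fun h z => ?_, fun z => ?_, fun z hz => ?_⟩
    · rw [Equiv.Perm.mul_apply, Equiv.Perm.mul_apply, hf1, he1]
    · rw [Equiv.Perm.mul_apply]
      exact pcRel_trans (hf2 z) (he2 (f z))
    · rw [Equiv.Perm.mul_apply, hf3 z hz, he3 z hz]
  inv_mem' := by
    rintro e ⟨he1, he2, he3⟩
    refine ⟨fun h z => ?_, fun z => ?_, fun z hz => ?_⟩
    · apply e.injective
      rw [Equiv.Perm.apply_inv_self, he1, Equiv.Perm.apply_inv_self]
    · have := he2 (e⁻¹ z)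
      rw [Equiv.Perm.apply_inv_self] at this
      exact pcRel_symm this
    · apply e.injective
      rw [Equiv.Perm.apply_inv_self, he3 z hz]

lemma Ek_maps {k : Fin (tt G)} {e : Equiv.Perm (PC G)} (he : e ∈ Ek G k) {y : PC G}
    (hy : y ∈ orbit (Hg G) (bb G k)) : e y ∈ orbit (Hg G) (bb G k) := by
  by_contra hc
  have h1 := he.2.2 (e y) hc
  have h2 := e.injective h1
  rw [h2] at hc
  exact hc hy

lemma smul_mem_orbit_iff {x y : PC G} (h : Hg G) :
    h • y ∈ orbit (Hg G) x ↔ y ∈ orbit (Hg G) x := by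
  constructor
  · intro hm
    obtain ⟨v, hv⟩ := mem_orbit_iff.mp hm
    exact mem_orbit_iff.mpr ⟨h⁻¹ * v, by rw [mul_smul, hv, inv_smul_smul]⟩
  · intro hm
    obtain ⟨v, rfl⟩ := mem_orbit_iff.mp hm
    exact mem_orbit_iff.mpr ⟨h * v, by rw [mul_smul]⟩

end
end Stmt16
namespace Stmt16
set_option linter.unusedSectionVars false
open MulAction

noncomputable section
open Classical

variable {G : Type} [Group G] [Finite G]

variable (G)

/-- The underlying function of the permutation of `𝒫_c` attached to an element of the
product of wreath products. -/
def Nfun (x : ∀ k, Wreath ↥(Ek G k) (ss G k)) (z : PC G) : PC G :=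
  push G (idx G z).1 ((x (idx G z).1).right (idx G z).2)
    (((x (idx G z).1).left ((x (idx G z).1).right (idx G z).2) : Equiv.Perm (PC G))
      (pull G z))

/-- The image of the orbit representative `ww G k j`. -/
def Nval (x : ∀ k, Wreath ↥(Ek G k) (ss G k)) (k : Fin (tt G)) (j : Fin (ss G k)) : PC G :=
  push G k ((x k).right j)
    (((x k).left ((x k).right j) : Equiv.Perm (PC G)) (bb G k))

lemma Nfun_w (x : ∀ k, Wreath ↥(Ek G k) (ss G k)) (k : Fin (tt G)) (j : Fin (ss G k))
    (h : Hg G) : Nfun G x (h • ww G k j) = h • Nval G x k j := by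
  rw [Nfun, pull_w, idx_w]
  have he := ((x k).left ((x k).right j)).2
  rw [he.1 h (bb G k)]
  exact push_smul G k _ (Ek_maps G he (mem_orbit_self _)) h

lemma Nfun_mul (x y : ∀ k, Wreath ↥(Ek G k) (ss G k)) (z : PC G) :
    Nfun G (x * y) z = Nfun G x (Nfun G y z) := by
  have hz := (wit_spec G z).symm
  set k := (idx G z).1
  set j := (idx G z).2
  rw [hz, Nfun_w, Nfun_w]
  -- compute Nval y k j
  have hey := ((y k).left ((y k).right j)).2
  have hor : (((y k).left ((y k).right j) : Equiv.Perm (PC G)) (bb G k))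
      ∈ orbit (Hg G) (bb G k) := Ek_maps G hey (mem_orbit_self _)
  obtain ⟨u, hu⟩ := mem_orbit_iff.mp hor
  have hNy : Nval G y k j = u • ww G k ((y k).right j) := by
    rw [Nval, ← hu, push_apply]
  rw [hNy, smul_smul, Nfun_w, ← smul_smul]
  congr 1
  -- Nval (x*y) k j = u • Nval x k ((y k).right j)
  have hxk : (x * y) k = x k * y k := rfl
  have hright : ((x * y) k).right = (x k).right * (y k).right := by
    rw [hxk, SemidirectProduct.mul_right]
  have hleft : ((x * y) k).left ((x k).right ((y k).right j))
      = (x k).left ((x k).right ((y k).right j)) * (y k).left ((y k).right j) := by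
    rw [hxk, SemidirectProduct.mul_left]
    show ((x k).left * (permHom _ _ ((x k).right)) ((y k).left)) _ = _
    rw [Pi.mul_apply]
    congr 2
    show (y k).left ((x k).right.symm ((x k).right ((y k).right j))) = _
    rw [Equiv.symm_apply_apply]
  rw [Nval, Nval, hright]
  have hj2 : ((x k).right * (y k).right) j = (x k).right ((y k).right j) :=
    Equiv.Perm.mul_apply _ _ _
  rw [hj2, hleft]
  have hex := ((x k).left ((x k).right ((y k).right j))).2
  rw [Subgroup.coe_mul, Equiv.Perm.mul_apply, ← hu, hex.1 u (bb G k)]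
  exact push_smul G k _ (Ek_maps G hex (mem_orbit_self _)) u

lemma Nfun_one (z : PC G) : Nfun G 1 z = z := by
  have hz := (wit_spec G z).symm
  rw [hz, Nfun_w]
  congr 1
  rw [Nval]
  have h1 : ((1 : ∀ k, Wreath ↥(Ek G k) (ss G k)) (idx G z).1) = 1 := rfl
  rw [h1, SemidirectProduct.one_right, SemidirectProduct.one_left]
  simp only [Pi.one_apply, Equiv.Perm.one_apply, OneMemClass.coe_one]
  have := push_apply G (idx G z).1 (idx G z).2 1
  rwa [one_smul, one_smul] at this

/-- The homomorphism from the product of wreath products to `Sym(𝒫_c)`. -/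
def Psi : (∀ k, Wreath ↥(Ek G k) (ss G k)) →* Equiv.Perm (PC G) where
  toFun x :=
    { toFun := Nfun G x
      invFun := Nfun G x⁻¹
      left_inv := fun z => by rw [← Nfun_mul, inv_mul_cancel, Nfun_one]
      right_inv := fun z => by rw [← Nfun_mul, mul_inv_cancel, Nfun_one] }
  map_one' := Equiv.ext fun z => Nfun_one G z
  map_mul' x y := by ext z; exact Nfun_mul G x y z

lemma Psi_apply (x : ∀ k, Wreath ↥(Ek G k) (ss G k)) (z : PC G) :
    Psi G x z = Nfun G x z := rfl

end
end Stmt16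
namespace Stmt16
set_option linter.unusedSectionVars false
open MulAction

noncomputable section
open Classical

variable {G : Type} [Group G] [Finite G]

variable (G)

lemma Psi_injective : Function.Injective (Psi G) := by
  rw [injective_iff_map_eq_one]
  intro x hx
  have hfix : ∀ z, Nfun G x z = z := fun z => Equiv.ext_iff.mp hx z
  have hval : ∀ k (j : Fin (ss G k)), Nval G x k j = ww G k j := by
    intro k j
    have h1 := hfix ((1 : Hg G) • ww G k j)
    rw [Nfun_w, one_smul, one_smul] at h1
    exact h1
  have hsig : ∀ k (j : Fin (ss G k)), (x k).right j = j := by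
    intro k j
    have h2 := hval k j
    obtain ⟨u, hu⟩ := mem_orbit_iff.mp
      (Ek_maps G ((x k).left ((x k).right j)).2 (mem_orbit_self (bb G k)))
    rw [Nval, ← hu, push_apply] at h2
    have hmem : ww G k j ∈ orbit (Hg G) (ww G k ((x k).right j)) := by
      rw [← h2]; exact mem_orbit _ _
    have := uniq' G hmem (mem_orbit_self _)
    exact eq_of_heq (Sigma.mk.inj_iff.mp this).2
  have hone : ∀ k (j : Fin (ss G k)), (x k).left j = 1 := by
    intro k j
    have hσ := hsig k j
    have h2 := hval k j
    obtain ⟨u, hu⟩ := mem_orbit_iff.mp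
      (Ek_maps G ((x k).left ((x k).right j)).2 (mem_orbit_self (bb G k)))
    rw [Nval, ← hu, push_apply, hσ] at h2
    have hbb : u • bb G k = bb G k := ((rel_bw G k j).1 u).mpr h2
    have hebb : ((x k).left ((x k).right j) : Equiv.Perm (PC G)) (bb G k) = bb G k := by
      rw [← hu, hbb]
    have : (x k).left ((x k).right j) = 1 := by
      apply Subtype.ext; apply Equiv.ext; intro z
      by_cases hz : z ∈ orbit (Hg G) (bb G k)
      · obtain ⟨v, rfl⟩ := mem_orbit_iff.mp hz
        have := ((x k).left ((x k).right j)).2.1 v (bb G k)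
        rw [this, hebb]
        rfl
      · have := ((x k).left ((x k).right j)).2.2.2 z hz
        rw [this]
        rfl
    rwa [hσ] at this
  funext k
  apply SemidirectProduct.ext
  · show (x k).left = 1
    funext j
    exact hone k j
  · show (x k).right = 1
    apply Equiv.ext
    intro j
    exact hsig k j

lemma Nfun_equivariant (x : ∀ k, Wreath ↥(Ek G k) (ss G k)) (h : Hg G) (z : PC G) :
    Nfun G x (h • z) = h • Nfun G x z := by
  have hz := (wit_spec G z).symm
  rw [hz, smul_smul, Nfun_w, Nfun_w, ← mul_smul]

lemma Psi_Y (x : ∀ k, Wreath ↥(Ek G k) (ss G k)) (z : PC G) : pcRel z (Nfun G x z) := by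
  have hz := (wit_spec G z).symm
  rw [hz, Nfun_w]
  set k := (idx G z).1
  set j := (idx G z).2
  set h := wit G z
  have hek := ((x k).left ((x k).right j)).2
  obtain ⟨u, hu⟩ := mem_orbit_iff.mp (Ek_maps G hek (mem_orbit_self (bb G k)))
  have hNv : Nval G x k j = u • ww G k ((x k).right j) := by
    rw [Nval, ← hu, push_apply]
  rw [hNv, smul_smul]
  refine pcRel_trans (pcRel_symm ((rel_bw G k j).2 h)) (pcRel_trans ?_ ((rel_bw G k _).2 (h * u)))
  have := hek.2.1 (h • bb G k)
  have heq : ((x k).left ((x k).right j) : Equiv.Perm (PC G)) (h • bb G k)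
      = (h * u) • bb G k := by
    rw [hek.1 h (bb G k), ← hu, smul_smul]
  rwa [heq] at this

lemma Psi_mem_SG (x : ∀ k, Wreath ↥(Ek G k) (ss G k)) : Psi G x ∈ SG G := by
  refine ⟨fun z => Psi_Y G x z, ?_, ?_, fun α z => ?_⟩
  · apply Equiv.ext; intro z
    rw [Equiv.Perm.mul_apply, Equiv.Perm.mul_apply]
    exact Nfun_equivariant G x ⟨thetaBar G, theta_mem⟩ z
  · apply Equiv.ext; intro z
    rw [Equiv.Perm.mul_apply, Equiv.Perm.mul_apply]
    exact Nfun_equivariant G x ⟨deltaBar G, delta_mem⟩ z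
  · exact Nfun_equivariant G x ⟨MulAction.toPermHom (MulAut G) (PC G) α, aperm_mem α⟩ z

/-- The function underlying the per-orbit component of `ψ`. -/
def eto (ψ : Equiv.Perm (PC G)) (k : Fin (tt G)) (j : Fin (ss G k)) (y : PC G) : PC G :=
  if y ∈ orbit (Hg G) (bb G k) then pull G (ψ (push G k j y)) else y

lemma eto_spec {ψ : Equiv.Perm (PC G)} {k : Fin (tt G)} {j i : Fin (ss G k)} {u : Hg G}
    (hw : ∀ h : Hg G, ψ (h • ww G k j) = (h * u) • ww G k i) (h : Hg G) :
    eto G ψ k j (h • bb G k) = (h * u) • bb G k := by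
  rw [eto, if_pos (mem_orbit _ _), push_apply, hw, pull_w]

lemma eto_off {ψ : Equiv.Perm (PC G)} {k : Fin (tt G)} {j : Fin (ss G k)} {z : PC G}
    (hz : z ∉ orbit (Hg G) (bb G k)) : eto G ψ k j z = z := if_neg hz

lemma exists_eperm (ψ : Equiv.Perm (PC G)) (hequi : ∀ (h : Hg G) z, ψ (h • z) = h • ψ z)
    (hY : ∀ z, pcRel z (ψ z)) (k : Fin (tt G)) (j i : Fin (ss G k)) (u : Hg G)
    (hu : u • ww G k i = ψ (ww G k j)) :
    ∃ e : ↥(Ek G k), ∀ h : Hg G,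
      (e : Equiv.Perm (PC G)) (h • bb G k) = (h * u) • bb G k := by
  have hequi' : ∀ (h : Hg G) z, ψ⁻¹ (h • z) = h • ψ⁻¹ z := by
    intro h z
    apply ψ.injective
    rw [Equiv.Perm.apply_inv_self, hequi, Equiv.Perm.apply_inv_self]
  have hpsiw : ∀ h : Hg G, ψ (h • ww G k j) = (h * u) • ww G k i := by
    intro h; rw [hequi, ← hu, smul_smul]
  have hpsiw' : ∀ h : Hg G, ψ⁻¹ (h • ww G k i) = (h * u⁻¹) • ww G k j := by
    intro h
    have h0 : ψ⁻¹ (ww G k i) = u⁻¹ • ww G k j := by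
      apply ψ.injective
      rw [Equiv.Perm.apply_inv_self, hequi, ← hu, inv_smul_smul]
    rw [hequi', h0, smul_smul]
  have hfg : ∀ y, eto G ψ⁻¹ k i (eto G ψ k j y) = y := by
    intro y
    by_cases hy : y ∈ orbit (Hg G) (bb G k)
    · obtain ⟨h, rfl⟩ := mem_orbit_iff.mp hy
      rw [eto_spec G hpsiw, eto_spec G hpsiw', mul_assoc, mul_inv_cancel, mul_one]
    · rw [eto_off G hy, eto_off G hy]
  have hgf : ∀ y, eto G ψ k j (eto G ψ⁻¹ k i y) = y := by
    intro y
    by_cases hy : y ∈ orbit (Hg G) (bb G k)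
    · obtain ⟨h, rfl⟩ := mem_orbit_iff.mp hy
      rw [eto_spec G hpsiw', eto_spec G hpsiw, mul_assoc, inv_mul_cancel, mul_one]
    · rw [eto_off G hy, eto_off G hy]
  refine ⟨⟨⟨eto G ψ k j, eto G ψ⁻¹ k i, hfg, hgf⟩, ?_, ?_, ?_⟩, fun h => eto_spec G hpsiw h⟩
  · intro h z
    show eto G ψ k j (h • z) = h • eto G ψ k j z
    by_cases hz : z ∈ orbit (Hg G) (bb G k)
    · obtain ⟨v, rfl⟩ := mem_orbit_iff.mp hz
      rw [smul_smul, eto_spec G hpsiw, eto_spec G hpsiw, smul_smul, mul_assoc]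
    · have h2 : h • z ∉ orbit (Hg G) (bb G k) := by
        intro hc; exact hz ((smul_mem_orbit_iff G h).mp hc)
      rw [eto_off G h2, eto_off G hz]
  · intro z
    show pcRel z (eto G ψ k j z)
    by_cases hz : z ∈ orbit (Hg G) (bb G k)
    · obtain ⟨v, rfl⟩ := mem_orbit_iff.mp hz
      rw [eto_spec G hpsiw]
      refine pcRel_trans ((rel_bw G k j).2 v) (pcRel_trans (b := (v * u) • ww G k i) ?_ ?_)
      · have := hY (v • ww G k j)
        rwa [hpsiw] at this
      · exact pcRel_symm ((rel_bw G k i).2 (v * u))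
    · rw [eto_off G hz]; exact pcRel_refl z
  · intro z hz
    show eto G ψ k j z = z
    exact eto_off G hz

lemma SG_le_range {ψ : Equiv.Perm (PC G)} (hψ : ψ ∈ SG G) : ∃ x, Psi G x = ψ := by
  obtain ⟨hY, hth, hdl, hal⟩ := hψ
  have hcent : ∀ π ∈ Hgrp G, ψ * π = π * ψ := by
    have hle : Hgrp G ≤ Subgroup.centralizer {ψ} := by
      rw [Hgrp, Subgroup.closure_le]
      rintro π hπ
      rw [SetLike.mem_coe, Subgroup.mem_centralizer_iff]
      rintro g hg
      rw [Set.mem_singleton_iff] at hg; subst hg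
      rcases hπ with hπ | ⟨α, rfl⟩
      · rcases Set.mem_insert_iff.mp hπ with rfl | hπ
        · exact hth
        · rw [Set.mem_singleton_iff] at hπ; subst hπ; exact hdl
      · apply Equiv.ext; intro z
        rw [Equiv.Perm.mul_apply, Equiv.Perm.mul_apply]
        exact hal α z
    intro π hπ
    exact Subgroup.mem_centralizer_iff.mp (hle hπ) ψ rfl
  have hequi : ∀ (h : Hg G) (z : PC G), ψ (h • z) = h • ψ z := by
    intro h z
    calc ψ (h • z) = (ψ * (h : Equiv.Perm (PC G))) z := rfl
    _ = ((h : Equiv.Perm (PC G)) * ψ) z := by rw [hcent h h.2]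
    _ = h • ψ z := rfl
  have hs : ∀ k (j : Fin (ss G k)), ∃ j', ψ (ww G k j) ∈ orbit (Hg G) (ww G k j') := by
    intro k j
    have hrel : Rel (ww G k j) (ψ (ww G k j)) := by
      constructor
      · intro h
        constructor
        · intro hh; rw [← hequi, hh]
        · intro hh
          have h3 := hequi h (ww G k j)
          rw [hh] at h3
          exact ψ.injective h3
      · intro h; rw [← hequi]; exact hY _
    obtain ⟨⟨k', j'⟩, hmem⟩ : ∃ p : Σ k, Fin (ss G k),
        ψ (ww G k j) ∈ orbit (Hg G) (ww G p.1 p.2) := ⟨idx G _, idx_mem G _⟩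
    have hk : k = k' := classP3 G hmem hrel
    subst hk
    exact ⟨j', hmem⟩
  choose σ0 hσ0 using hs
  have hσinj : ∀ k, Function.Injective (σ0 k) := by
    intro k j j₂ hjj
    have h1 := hσ0 k j
    rw [hjj] at h1
    obtain ⟨u, hu⟩ := mem_orbit_iff.mp h1
    obtain ⟨v, hv⟩ := mem_orbit_iff.mp (hσ0 k j₂)
    have h3 : ψ (ww G k j) = ψ ((u * v⁻¹) • ww G k j₂) := by
      rw [hequi, mul_smul, ← hv, ← hu, inv_smul_smul]
    have hww := ψ.injective h3
    have hmem2 : ww G k j ∈ orbit (Hg G) (ww G k j₂) := by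
      rw [hww]; exact mem_orbit _ _
    have := uniq' G (mem_orbit_self (ww G k j)) hmem2
    exact eq_of_heq (Sigma.mk.inj_iff.mp this).2
  let σ : ∀ k, Equiv.Perm (Fin (ss G k)) := fun k =>
    Equiv.ofBijective (σ0 k) (Finite.injective_iff_bijective.mp (hσinj k))
  choose uu huu using fun k j => mem_orbit_iff.mp (hσ0 k j)
  have he : ∀ k (i : Fin (ss G k)), ∃ e : ↥(Ek G k), ∀ h : Hg G,
      (e : Equiv.Perm (PC G)) (h • bb G k) = (h * uu k ((σ k).symm i)) • bb G k := by
    intro k i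
    apply exists_eperm G ψ hequi hY k ((σ k).symm i) i
    have h5 := huu k ((σ k).symm i)
    rwa [show σ0 k ((σ k).symm i) = i from (σ k).apply_symm_apply i] at h5
  choose ee hee using he
  refine ⟨fun k => ⟨fun i => ee k i, σ k⟩, ?_⟩
  apply Equiv.ext; intro z
  rw [Psi_apply]
  have hz := (wit_spec G z).symm
  rw [hz, Nfun_w]
  set k := (idx G z).1
  set j := (idx G z).2
  have hx : Nval G (fun k => ⟨fun i => ee k i, σ k⟩) k j = ψ (ww G k j) := by
    rw [Nval]
    have h1 := hee k (σ k j) 1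
    rw [one_mul, one_smul] at h1
    rw [show (σ k).symm (σ k j) = j from (σ k).symm_apply_apply j] at h1
    show push G k (σ k j) ((ee k (σ k j) : Equiv.Perm (PC G)) (bb G k)) = _
    rw [h1, push_apply]
    exact huu k j
  rw [hx, hequi]

lemma Psi_range_eq : (Psi G).range = SG G := by
  apply le_antisymm
  · rintro π ⟨x, rfl⟩
    exact Psi_mem_SG G x
  · intro ψ hψ
    exact SG_le_range G hψ

/-- The wreath-product decomposition of `𝒮(G)`. -/
def isoSG : (∀ k, Wreath ↥(Ek G k) (ss G k)) ≃* ↥(SG G) := by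
  apply MulEquiv.ofBijective ((Psi G).codRestrict (SG G) (Psi_mem_SG G))
  constructor
  · intro a b hab
    exact Psi_injective G (congrArg Subtype.val hab)
  · rintro ⟨ψ, hψ⟩
    obtain ⟨x, hx⟩ := SG_le_range G hψ
    exact ⟨x, Subtype.ext hx⟩

end
end Stmt16
namespace Stmt16
set_option linter.unusedSectionVars false
open MulAction

noncomputable section
open Classical

variable {G : Type} [Group G] [Finite G]

variable (G)

lemma Ek_ext {k : Fin (tt G)} {e f : ↥(Ek G k)}
    (h : (e : Equiv.Perm (PC G)) (bb G k) = (f : Equiv.Perm (PC G)) (bb G k)) : e = f := by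
  apply Subtype.ext; apply Equiv.ext; intro z
  by_cases hz : z ∈ orbit (Hg G) (bb G k)
  · obtain ⟨v, rfl⟩ := mem_orbit_iff.mp hz
    rw [e.2.1 v (bb G k), f.2.1 v (bb G k), h]
  · rw [e.2.2.2 z hz, f.2.2.2 z hz]

/-- The subgroup of `H` corresponding to the component group `E_k`. -/
def Kk (k : Fin (tt G)) : Subgroup (Hg G) where
  carrier := {n | ∃ e : ↥(Ek G k), (e : Equiv.Perm (PC G)) (bb G k) = n⁻¹ • bb G k}
  one_mem' := ⟨1, by rw [inv_one, one_smul]; rfl⟩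
  mul_mem' := by
    rintro n n' ⟨e, he⟩ ⟨f, hf⟩
    refine ⟨e * f, ?_⟩
    rw [Subgroup.coe_mul, Equiv.Perm.mul_apply, hf, e.2.1 n'⁻¹ (bb G k), he, smul_smul,
      ← mul_inv_rev]
  inv_mem' := by
    rintro n ⟨e, he⟩
    refine ⟨e⁻¹, ?_⟩
    apply (e : Equiv.Perm (PC G)).injective
    have h1 : ((e⁻¹ : ↥(Ek G k)) : Equiv.Perm (PC G)) = (e : Equiv.Perm (PC G))⁻¹ := rfl
    rw [h1, Equiv.Perm.apply_inv_self, inv_inv, e.2.1 n (bb G k), he, smul_smul,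
      mul_inv_cancel, one_smul]

/-- The surjection from a subgroup of `H` onto `E_k`. -/
def fk (k : Fin (tt G)) : ↥(Kk G k) →* ↥(Ek G k) where
  toFun n := n.2.choose
  map_one' := by
    apply Ek_ext G
    rw [(1 : ↥(Kk G k)).2.choose_spec]
    norm_num
  map_mul' a b := by
    apply Ek_ext G
    rw [(a * b).2.choose_spec]
    have h2 : ((a.2.choose * b.2.choose : ↥(Ek G k)) : Equiv.Perm (PC G)) (bb G k)
        = (a.2.choose : Equiv.Perm (PC G)) ((b.2.choose : Equiv.Perm (PC G)) (bb G k)) := rfl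
    rw [h2, b.2.choose_spec, a.2.choose.2.1 _ (bb G k), a.2.choose_spec, smul_smul,
      ← mul_inv_rev]
    rfl

lemma fk_surjective (k : Fin (tt G)) : Function.Surjective (fk G k) := by
  intro e
  obtain ⟨v, hv⟩ := mem_orbit_iff.mp (Ek_maps G e.2 (mem_orbit_self (bb G k)))
  have hn : v⁻¹ ∈ Kk G k := ⟨e, by rw [inv_inv, hv]⟩
  refine ⟨⟨v⁻¹, hn⟩, ?_⟩
  apply Ek_ext G
  show ((⟨v⁻¹, hn⟩ : ↥(Kk G k)).2.choose : Equiv.Perm (PC G)) (bb G k)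
    = (e : Equiv.Perm (PC G)) (bb G k)
  rw [(⟨v⁻¹, hn⟩ : ↥(Kk G k)).2.choose_spec]
  show ((v⁻¹ : Hg G))⁻¹ • bb G k = _
  rw [inv_inv, hv]

lemma ww_pcRel (k : Fin (tt G)) (j j' : Fin (ss G k)) : pcRel (ww G k j) (ww G k j') :=
  pcRel_trans (pcRel_symm (rel_bw G k j).pcRel) (rel_bw G k j').pcRel

lemma ww_inj (k : Fin (tt G)) : Function.Injective (ww G k) := by
  intro j j' h
  have h2 : ww G k j ∈ orbit (Hg G) (ww G k j') := by rw [h]; exact mem_orbit_self _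
  have := uniq' G (mem_orbit_self (ww G k j)) h2
  exact eq_of_heq (Sigma.mk.inj_iff.mp this).2

lemma centralizer_pair {p : ↥(GenPairs G)} {c : G}
    (h1 : c * (p : G × G).1 = (p : G × G).1 * c)
    (h2 : c * (p : G × G).2 = (p : G × G).2 * c) :
    c ∈ Subgroup.center G := by
  rw [Subgroup.mem_center_iff]
  intro g
  have hg : g ∈ Subgroup.closure {(p : G × G).1, (p : G × G).2} := by
    rw [p.2]; trivial
  induction hg using Subgroup.closure_induction with
  | mem x hx =>
    rcases hx with rfl | hx
    · exact h1.symm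
    · rw [Set.mem_singleton_iff] at hx; subst hx; exact h2.symm
  | one => rw [one_mul, mul_one]
  | mul x y _ _ hx hy => rw [mul_assoc, hy, ← mul_assoc, hx, mul_assoc]
  | inv x _ hx =>
    calc x⁻¹ * c = x⁻¹ * (c * x) * x⁻¹ := by group
      _ = x⁻¹ * (x * c) * x⁻¹ := by rw [← hx]
      _ = c * x⁻¹ := by group

lemma count_le (m : ℕ) (hm : IsGreatest {n | ∃ g : G, n = Nat.card {h : G | IsConj g h}} m)
    (n : ℕ) (v : Fin n → PC G) (hv : Function.Injective v)
    (hrel : ∀ i i', pcRel (v i) (v i')) :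
    n * Nat.card G ≤ Nat.card (Subgroup.center G) * m ^ 2 := by
  rcases Nat.eq_zero_or_pos n with rfl | hn
  · simp
  have i0 : Fin n := ⟨0, hn⟩
  set p : Fin n → ↥(GenPairs G) := fun i => (v i).out with hp
  have hpv : ∀ i, Quotient.mk (pairSetoid G) (p i) = v i := fun i => Quotient.out_eq _
  set a := ((p i0) : G × G).1 with ha
  set b := ((p i0) : G × G).2 with hb
  have hconj : ∀ i, IsConj a ((p i : G × G).1) ∧ IsConj b ((p i : G × G).2) := by
    intro i
    have h0 := hrel i0 i
    rw [← hpv i0, ← hpv i] at h0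
    exact h0
  set Z := Subgroup.center G with hZ
  set F0 : Fin n → G → {c : G // IsConj a c} × {c : G // IsConj b c} := fun i t =>
    (⟨t * (p i : G × G).1 * t⁻¹, (hconj i).1.trans (isConj_iff.mpr ⟨t, rfl⟩)⟩,
     ⟨t * (p i : G × G).2 * t⁻¹, (hconj i).2.trans (isConj_iff.mpr ⟨t, rfl⟩)⟩) with hF0def
  have hF0 : ∀ (i : Fin n) (t t' : G), @Setoid.r G (QuotientGroup.leftRel Z) t t' →
      F0 i t = F0 i t' := by
    intro i t t' htt
    have hz : t⁻¹ * t' ∈ Z := QuotientGroup.leftRel_apply.mp htt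
    have ht' : t' = t * (t⁻¹ * t') := by rw [← mul_assoc, mul_inv_cancel, one_mul]
    have hcomm1 : ∀ x : G, (t⁻¹ * t') * x = x * (t⁻¹ * t') := fun x =>
      (Subgroup.mem_center_iff.mp hz x).symm
    have key : ∀ x : G, t * x * t⁻¹ = t' * x * t'⁻¹ := by
      intro x
      rw [ht', mul_inv_rev]
      calc t * x * t⁻¹ = t * ((t⁻¹ * t') * x * (t⁻¹ * t')⁻¹) * t⁻¹ := by
            rw [hcomm1 x, mul_assoc _ _ ((t⁻¹ * t')⁻¹), mul_inv_cancel, mul_one]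
        _ = t * (t⁻¹ * t') * x * ((t⁻¹ * t')⁻¹ * t⁻¹) := by group
    rw [hF0def]
    simp only [Prod.mk.injEq, Subtype.mk.injEq]
    exact ⟨key _, key _⟩
  set F : Fin n × (G ⧸ Z) → {c : G // IsConj a c} × {c : G // IsConj b c} :=
    fun q => Quotient.liftOn' q.2 (F0 q.1) (hF0 q.1) with hFdef
  have hFinj : Function.Injective F := by
    rintro ⟨i, t⟩ ⟨i', t'⟩ hF
    induction t using Quotient.inductionOn' with
    | h t =>
    induction t' using Quotient.inductionOn' with
    | h t' =>
    have h1 : F0 i t = F0 i' t' := hF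
    rw [hF0def] at h1
    simp only [Prod.mk.injEq, Subtype.mk.injEq] at h1
    obtain ⟨hc1, hc2⟩ := h1
    have hpp : Quotient.mk (pairSetoid G) (p i) = Quotient.mk (pairSetoid G) (p i') := by
      apply Quotient.sound
      refine ⟨t'⁻¹ * t, ?_, ?_⟩
      · calc (t'⁻¹ * t) * (p i : G × G).1 * (t'⁻¹ * t)⁻¹
            = t'⁻¹ * (t * (p i : G × G).1 * t⁻¹) * t' := by group
        _ = t'⁻¹ * (t' * (p i' : G × G).1 * t'⁻¹) * t' := by rw [hc1]
        _ = (p i' : G × G).1 := by group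
      · calc (t'⁻¹ * t) * (p i : G × G).2 * (t'⁻¹ * t)⁻¹
            = t'⁻¹ * (t * (p i : G × G).2 * t⁻¹) * t' := by group
        _ = t'⁻¹ * (t' * (p i' : G × G).2 * t'⁻¹) * t' := by rw [hc2]
        _ = (p i' : G × G).2 := by group
    have hii : i = i' := hv (by rw [← hpv i, ← hpv i', hpp])
    subst hii
    have hcen : t'⁻¹ * t ∈ Z := by
      apply centralizer_pair G (p := p i)
      · have h6 := congrArg (fun w => t'⁻¹ * w * t) hc1
        simpa [mul_assoc] using h6
      · have h6 := congrArg (fun w => t'⁻¹ * w * t) hc2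
        simpa [mul_assoc] using h6
    have : (Quotient.mk'' t : G ⧸ Z) = Quotient.mk'' t' := by
      apply Quotient.sound'
      rw [QuotientGroup.leftRel_apply]
      have := Z.inv_mem hcen
      rwa [mul_inv_rev, inv_inv] at this
    rw [Prod.mk.injEq]
    exact ⟨rfl, this⟩
  have hcard := Nat.card_le_card_of_injective F hFinj
  rw [Nat.card_prod, Nat.card_prod] at hcard
  have hA : Nat.card {c : G // IsConj a c} ≤ m := hm.2 ⟨a, rfl⟩
  have hB : Nat.card {c : G // IsConj b c} ≤ m := hm.2 ⟨b, rfl⟩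
  have hfin : Nat.card (Fin n) = n := by simp
  rw [hfin] at hcard
  have h8 : n * Nat.card (G ⧸ Z) ≤ m * m := hcard.trans (Nat.mul_le_mul hA hB)
  calc n * Nat.card G = n * (Nat.card (G ⧸ Z) * Nat.card Z) := by
        rw [Subgroup.card_eq_card_quotient_mul_card_subgroup]
    _ = (n * Nat.card (G ⧸ Z)) * Nat.card Z := by ring
    _ ≤ (m * m) * Nat.card Z := Nat.mul_le_mul_right _ h8
    _ = Nat.card Z * m ^ 2 := by ring

lemma card_sigma_le (r : ℕ) (rep : Fin r → G × G) (hrep : ∀ i, rep i ∈ GenPairs G)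
    (hcover : ∀ q ∈ GenPairs G, ∃ i : Fin r, ∃ α : MulAut G, (α (rep i).1, α (rep i).2) = q) :
    ∑ k, ss G k ≤ r := by
  have hch : ∀ pr : Σ k, Fin (ss G k), ∃ i : Fin r, ∃ α : MulAut G,
      (α (rep i).1, α (rep i).2) = (((ww G pr.1 pr.2).out : ↥(GenPairs G)) : G × G) :=
    fun pr => hcover _ ((ww G pr.1 pr.2).out).2
  choose f αf hαf using hch
  have hsm : ∀ pr : Σ k, Fin (ss G k),
      αf pr • (Quotient.mk (pairSetoid G) ⟨rep (f pr), hrep (f pr)⟩) = ww G pr.1 pr.2 := by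
    intro pr
    have h1 : autPair (αf pr) ⟨rep (f pr), hrep (f pr)⟩ = (ww G pr.1 pr.2).out :=
      Subtype.ext (hαf pr)
    calc αf pr • (Quotient.mk (pairSetoid G) ⟨rep (f pr), hrep (f pr)⟩)
        = Quotient.mk (pairSetoid G) (autPair (αf pr) ⟨rep (f pr), hrep (f pr)⟩) := rfl
      _ = Quotient.mk (pairSetoid G) ((ww G pr.1 pr.2).out) := by rw [h1]
      _ = ww G pr.1 pr.2 := Quotient.out_eq _
  have hfinj : Function.Injective f := by
    intro pr pr' hff
    have h1 := hsm pr
    have h2 := hsm pr'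
    rw [hff] at h1
    have h4 : (αf pr)⁻¹ • ww G pr.1 pr.2
        = Quotient.mk (pairSetoid G) ⟨rep (f pr'), hrep (f pr')⟩ := by
      rw [inv_smul_eq_iff]; exact h1.symm
    have h3 : ww G pr'.1 pr'.2 = (αf pr' * (αf pr)⁻¹) • ww G pr.1 pr.2 := by
      rw [mul_smul, h4, h2]
    have hmem : ww G pr'.1 pr'.2 ∈ orbit (Hg G) (ww G pr.1 pr.2) := by
      refine mem_orbit_iff.mpr
        ⟨⟨MulAction.toPermHom (MulAut G) (PC G) (αf pr' * (αf pr)⁻¹), aperm_mem _⟩, ?_⟩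
      exact h3.symm
    have h5 := uniq' G (mem_orbit_self (ww G pr'.1 pr'.2)) hmem
    exact h5.symm
  calc ∑ k, ss G k = Fintype.card (Σ k, Fin (ss G k)) := by
        rw [Fintype.card_sigma]; simp
    _ ≤ Fintype.card (Fin r) := Fintype.card_le_of_injective f hfinj
    _ = r := Fintype.card_fin r

end
end Stmt16
namespace Stmt16
set_option linter.unusedSectionVars false

/-- `Equiv.piCongrLeft'` as a `MulEquiv`. -/
def mulPiCongrLeft' {ι ι' : Type} (M : ι → Type) [∀ i, Group (M i)] (e : ι ≃ ι') :
    ((i : ι) → M i) ≃* ((i : ι') → M (e.symm i)) :=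
  { Equiv.piCongrLeft' M e with map_mul' := fun _ _ => rfl }

/-- Extension of a family of groups by trivial groups. -/
def E2' {t0 pad : ℕ} (A : Fin t0 → Type) (i : Fin t0 ⊕ Fin pad) : Type :=
  Sum.rec A (fun _ => PUnit) i

instance instE2' {t0 pad : ℕ} (A : Fin t0 → Type) [instA : ∀ k, Group (A k)]
    (i : Fin t0 ⊕ Fin pad) : Group (E2' A i) :=
  Sum.rec (motive := fun i => Group (E2' (pad := pad) A i))
    (fun k => inferInstanceAs (Group (A k))) (fun _ => inferInstanceAs (Group PUnit)) i

/-- Extension of a family of naturals by ones. -/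
def rk2' {t0 pad : ℕ} (n : Fin t0 → ℕ) (i : Fin t0 ⊕ Fin pad) : ℕ :=
  Sum.rec n (fun _ => 1) i

instance : Subsingleton (Wreath PUnit 1) := by
  constructor
  intro a b
  apply SemidirectProduct.ext
  · funext i
    exact Subsingleton.elim _ _
  · apply Equiv.ext
    intro i
    apply Fin.ext
    have h1 := (a.right i).isLt
    have h2 := (b.right i).isLt
    omega

/-- Padding a product of wreath products by trivial wreath products. -/
def padEquiv {t0 pad : ℕ} (A : Fin t0 → Type) [instA : ∀ k, Group (A k)] (n : Fin t0 → ℕ) :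
    (∀ k, Wreath (A k) (n k)) ≃*
      (∀ i : Fin t0 ⊕ Fin pad, Wreath (E2' A i) (rk2' n i)) where
  toFun x i := Sum.rec (motive := fun i => Wreath (E2' A i) (rk2' n i))
    (fun k => x k) (fun _ => (1 : Wreath PUnit 1)) i
  invFun y k := y (.inl k)
  left_inv x := funext fun k => rfl
  right_inv y := by
    funext i
    cases i with
    | inl k => rfl
    | inr j =>
      exact @Subsingleton.elim _ (inferInstanceAs (Subsingleton (Wreath PUnit 1))) _ _
  map_mul' x y := by
    funext i
    cases i with
    | inl k => rfl
    | inr j =>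
      exact @Subsingleton.elim _ (inferInstanceAs (Subsingleton (Wreath PUnit 1))) _ _

end Stmt16
/-- `𝒮(G)` is a finite direct product of wreath products `E_k ≀ S_{r_k}` with each `E_k` a
subquotient of `H`, `Σ_k r_k = r`, and `r_k ≤ |Z|·m²/|G|` where `m` is the largest size of a
conjugacy class of `G` and `Z` is the centre of `G`. -/
theorem stmt16 (G : Type) [Group G] [Finite G]
    (r : ℕ) (rep : Fin r → G × G)
    (hrep : ∀ i, rep i ∈ GenPairs G)
    (hdist : ∀ i j : Fin r, (∃ α : MulAut G, (α (rep i).1, α (rep i).2) = rep j) → i = j)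
    (hcover : ∀ q ∈ GenPairs G, ∃ i : Fin r, ∃ α : MulAut G, (α (rep i).1, α (rep i).2) = q)
    (m : ℕ) (hm : IsGreatest {n | ∃ g : G, n = Nat.card {h : G | IsConj g h}} m) :
    ∃ (t : ℕ) (rk : Fin t → ℕ) (E : Fin t → Type) (instE : ∀ k, Group (E k)),
      letI : ∀ k, Group (E k) := instE
      (∑ k, rk k) = r ∧
      (∀ k, rk k * Nat.card G ≤ Nat.card (Subgroup.center G) * m ^ 2) ∧
      (∀ k, ∃ K : Subgroup ↥(Hgrp G), ∃ f : ↥K →* E k, Function.Surjective f) ∧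
      Nonempty (↥(SG G) ≃* ((k : Fin t) → Wreath (E k) (rk k))) := by

  classical
  have hsum := Stmt16.card_sigma_le G r rep hrep hcover
  set t0 := Stmt16.tt G with ht0
  set pad := r - ∑ k, Stmt16.ss G k with hpadd
  refine ⟨t0 + pad,
    fun k => Stmt16.rk2' (Stmt16.ss G) (finSumFinEquiv.symm k),
    fun k => Stmt16.E2' (pad := pad) (fun k0 => ↥(Stmt16.Ek G k0)) (finSumFinEquiv.symm k),
    fun k => inferInstance, ?_, ?_, ?_, ?_⟩
  · -- the sum is r
    have h1 : ∑ i : Fin t0 ⊕ Fin pad, Stmt16.rk2' (Stmt16.ss G) i = r := by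
      rw [Fintype.sum_sum_type]
      have h2 : ∑ k : Fin t0, Stmt16.rk2' (pad := pad) (Stmt16.ss G) (Sum.inl k)
          = ∑ k, Stmt16.ss G k := rfl
      have h3 : ∑ j : Fin pad, Stmt16.rk2' (pad := pad) (Stmt16.ss G) (Sum.inr j) = pad := by
        simp [Stmt16.rk2']
      rw [h2, h3]
      omega
    rw [← h1]
    exact (Fintype.sum_equiv finSumFinEquiv _ _ (fun i => by
      rw [Equiv.symm_apply_apply])).symm
  · -- the bound on each rk
    intro k
    show Stmt16.rk2' (Stmt16.ss G) (finSumFinEquiv.symm k) * Nat.card G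
      ≤ Nat.card (Subgroup.center G) * m ^ 2
    rcases hsk : finSumFinEquiv.symm k with k0 | k0
    · exact Stmt16.count_le G m hm (Stmt16.ss G k0) (Stmt16.ww G k0)
        (Stmt16.ww_inj G k0) (Stmt16.ww_pcRel G k0)
    · have hr : 0 < r := by
        have := k0.pos
        omega
      exact Stmt16.count_le G m hm 1
        (fun _ => Quotient.mk (pairSetoid G) ⟨rep ⟨0, hr⟩, hrep ⟨0, hr⟩⟩)
        (fun x y _ => Subsingleton.elim x y)
        (fun _ _ => Stmt16.pcRel_refl _)
  · -- subquotients
    intro k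
    show ∃ K : Subgroup ↥(Hgrp G),
      ∃ f : ↥K →* Stmt16.E2' (pad := pad) (fun k0 => ↥(Stmt16.Ek G k0)) (finSumFinEquiv.symm k),
      Function.Surjective f
    rcases hsk : finSumFinEquiv.symm k with k0 | k0
    · exact ⟨Stmt16.Kk G k0, Stmt16.fk G k0, Stmt16.fk_surjective G k0⟩
    · exact ⟨⊥, 1, fun y => ⟨1, @Subsingleton.elim _
        (inferInstanceAs (Subsingleton PUnit)) _ _⟩⟩
  · -- the isomorphism
    refine ⟨?_⟩
    refine MulEquiv.trans (Stmt16.isoSG G).symm ?_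
    refine MulEquiv.trans
      (Stmt16.padEquiv (pad := pad) (fun k0 => ↥(Stmt16.Ek G k0)) (Stmt16.ss G)) ?_
    exact Stmt16.mulPiCongrLeft'
      (fun i => Wreath (Stmt16.E2' (fun k0 => ↥(Stmt16.Ek G k0)) i)
        (Stmt16.rk2' (Stmt16.ss G) i)) finSumFinEquiv
end

section
/- Let G be a finite group; let C_x and C_y be the centralizers in Ḡ of x and y, and write a^b = b⁻¹ab. Then: (i) if two automorphisms φ̃₁, φ̃₂ of Ḡ satisfy φ̃_j(y) = y and φ̃_j(x) = x^{f_j} for elements f_j ∈ Ḡ (j = 1,2), and φ̃₁ and φ̃₂ induce the same element of Out(Ḡ), then f₁ and f₂ lie in the same double coset, i.e., C_x f₁ C_y = C_x f₂ C_y; (ii) if an automorphism φ̃ of Ḡ with φ̃(x) = x^f and φ̃(y) = y represents an element of Out(Ḡ) commuting with the class of θ, then 1 ∈ C_x · f θ(f) · (C_y)^{θ(f)}, where (C_y)^{θ(f)} = θ(f)⁻¹ C_y θ(f); (iii) conversely, if φ̃ ∈ Aut(Ḡ) satisfies φ̃(x) = x^f, φ̃(y) = y and 1 ∈ C_x ·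 f θ(f) · (C_y)^{θ(f)}, then the class of φ̃ in Out(Ḡ) commutes with the class of θ. -/
/-- The double coset `A f B` in a group. -/
def dCoset {Γ : Type} [Group Γ] (A B : Subgroup Γ) (f : Γ) : Set Γ :=
  {g | ∃ a ∈ A, ∃ b ∈ B, g = a * f * b}

lemma gen_top (G : Type) [Group G] :
    Subgroup.closure ({xbar G, ybar G} : Set (Gbar G)) = ⊤ := by
  have h1 : ({xbar G, ybar G} : Set (Gbar G)) =
      ⇑(QuotientGroup.mk' (NG G)) '' (Set.range (FreeGroup.of : Bool → F2)) := by
    ext g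
    simp only [Set.mem_image, Set.mem_range, Set.mem_insert_iff, Set.mem_singleton_iff]
    constructor
    · rintro (rfl | rfl)
      · exact ⟨fx, ⟨true, rfl⟩, rfl⟩
      · exact ⟨fy, ⟨false, rfl⟩, rfl⟩
    · rintro ⟨_, ⟨b, rfl⟩, rfl⟩
      cases b
      · right; rfl
      · left; rfl
  rw [h1, ← MonoidHom.map_closure, FreeGroup.closure_range_of, ← MonoidHom.range_eq_map,
    MonoidHom.range_eq_top]
  exact QuotientGroup.mk'_surjective _

lemma aut_ext {G : Type} [Group G] (φ ψ : MulAut (Gbar G))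
    (hx : φ (xbar G) = ψ (xbar G)) (hy : φ (ybar G) = ψ (ybar G)) : φ = ψ := by
  ext g
  have hg : g ∈ Subgroup.closure ({xbar G, ybar G} : Set (Gbar G)) := by
    rw [gen_top]; trivial
  induction hg using Subgroup.closure_induction with
  | mem z hz => rcases hz with rfl | rfl <;> assumption
  | one => simp
  | mul a b _ _ ha hb => simp [map_mul, ha, hb]
  | inv a _ ha => simp [map_inv, ha]

lemma cent_conj {Γ : Type} [Group Γ] {z c : Γ} (h : c ∈ Subgroup.centralizer {z}) :
    c * z * c⁻¹ = z := by
  rw [Subgroup.mem_centralizer_singleton_iff] at h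
  rw [h]; group

lemma cent_of_conj {Γ : Type} [Group Γ] {z c : Γ} (h : c * z * c⁻¹ = z) :
    c ∈ Subgroup.centralizer {z} := by
  rw [Subgroup.mem_centralizer_singleton_iff]
  calc c * z = (c * z * c⁻¹) * c := by group
    _ = z * c := by rw [h]

lemma dCoset_eq {Γ : Type} [Group Γ] (A B : Subgroup Γ) (f₁ f₂ : Γ)
    (a : Γ) (ha : a ∈ A) (b : Γ) (hb : b ∈ B) (hf : f₂ = a * f₁ * b) :
    dCoset A B f₁ = dCoset A B f₂ := by
  subst hf
  ext g
  constructor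
  · rintro ⟨a', ha', b', hb', rfl⟩
    exact ⟨a' * a⁻¹, mul_mem ha' (inv_mem ha), b⁻¹ * b', mul_mem (inv_mem hb) hb', by group⟩
  · rintro ⟨a', ha', b', hb', rfl⟩
    exact ⟨a' * a, mul_mem ha' ha, b * b', mul_mem hb hb', by group⟩

/-- (i) an element of `𝒢𝒯₁(G)` determines a unique double coset `C_x f C_y`;
(ii) if `φ̃ : x ↦ x^f, y ↦ y` commutes with `θ` in `Out(Ḡ)` then
`1 ∈ C_x · fθ(f) · (C_y)^{θ(f)}`; (iii) conversely. -/
theorem stmt18 (G : Type) [Group G] [Finite G]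
    (θ : MulAut (Gbar G))
    (hθx : θ (xbar G) = ybar G) (hθy : θ (ybar G) = xbar G) :
    -- (i)
    (∀ (φ₁ φ₂ : MulAut (Gbar G)) (f₁ f₂ : Gbar G),
      φ₁ (ybar G) = ybar G → φ₁ (xbar G) = f₁⁻¹ * xbar G * f₁ →
      φ₂ (ybar G) = ybar G → φ₂ (xbar G) = f₂⁻¹ * xbar G * f₂ →
      OutMk φ₁ = OutMk φ₂ →
      dCoset (Subgroup.centralizer {xbar G}) (Subgroup.centralizer {ybar G}) f₁ =
        dCoset (Subgroup.centralizer {xbar G}) (Subgroup.centralizer {ybar G}) f₂) ∧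
    -- (ii)
    (∀ (φ : MulAut (Gbar G)) (f : Gbar G),
      φ (xbar G) = f⁻¹ * xbar G * f → φ (ybar G) = ybar G →
      Commute (OutMk φ) (OutMk θ) →
      ∃ a ∈ Subgroup.centralizer {xbar G}, ∃ b ∈ Subgroup.centralizer {ybar G},
        (1 : Gbar G) = a * (f * θ f) * ((θ f)⁻¹ * b * θ f)) ∧
    -- (iii)
    (∀ (φ : MulAut (Gbar G)) (f : Gbar G),
      φ (xbar G) = f⁻¹ * xbar G * f → φ (ybar G) = ybar G →
      (∃ a ∈ Subgroup.centralizer {xbar G}, ∃ b ∈ Subgroup.centralizer {ybar G},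
        (1 : Gbar G) = a * (f * θ f) * ((θ f)⁻¹ * b * θ f)) →
      Commute (OutMk φ) (OutMk θ)) := by
  refine ⟨?_, ?_, ?_⟩
  · -- (i)
    intro φ₁ φ₂ f₁ f₂ h1y h1x h2y h2x hout
    rw [OutMk, QuotientGroup.mk'_eq_mk'] at hout
    obtain ⟨n, ⟨g, rfl⟩, hn⟩ := hout
    set g' : Gbar G := φ₁ g with hg'
    have hφ₂ : ∀ z, φ₂ z = g' * φ₁ z * g'⁻¹ := by
      intro z
      rw [← hn]
      simp [MulAut.conj_apply, map_mul, map_inv, hg', mul_assoc]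
    have hgy : g' ∈ Subgroup.centralizer {ybar G} := by
      apply cent_of_conj
      have h := hφ₂ (ybar G)
      rw [h2y, h1y] at h
      exact h.symm
    have h2 : f₂⁻¹ * xbar G * f₂ = g' * (f₁⁻¹ * xbar G * f₁) * g'⁻¹ := by
      have h := hφ₂ (xbar G)
      rw [h2x, h1x] at h
      exact h
    have hgx : f₂ * g' * f₁⁻¹ ∈ Subgroup.centralizer {xbar G} := by
      apply cent_of_conj
      calc (f₂ * g' * f₁⁻¹) * xbar G * (f₂ * g' * f₁⁻¹)⁻¹
          = f₂ * (g' * (f₁⁻¹ * xbar G * f₁) * g'⁻¹) * f₂⁻¹ := by group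
        _ = f₂ * (f₂⁻¹ * xbar G * f₂) * f₂⁻¹ := by rw [← h2]
        _ = xbar G := by group
    exact dCoset_eq _ _ f₁ f₂ (f₂ * g' * f₁⁻¹) hgx g'⁻¹ (inv_mem hgy) (by group)
  · -- (ii)
    intro φ f hx hy hcomm
    have h : OutMk (φ * θ) = OutMk (θ * φ) := by
      simpa [map_mul] using hcomm.eq
    rw [OutMk, QuotientGroup.mk'_eq_mk'] at h
    obtain ⟨n, ⟨g, rfl⟩, hn⟩ := h
    set g' : Gbar G := φ (θ g) with hg'
    have heq : ∀ z, (θ * φ) z = g' * (φ (θ z)) * g'⁻¹ := by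
      intro z
      rw [← hn]
      simp [MulAut.conj_apply, map_mul, map_inv, hg', mul_assoc]
    have hx' : (θ f)⁻¹ * ybar G * θ f = g' * ybar G * g'⁻¹ := by
      have h := heq (xbar G)
      simp only [MulAut.mul_apply, hx, map_mul, map_inv, hθx, hy] at h
      simpa [mul_assoc] using h
    have hy' : xbar G = g' * (f⁻¹ * xbar G * f) * g'⁻¹ := by
      have h := heq (ybar G)
      simp only [MulAut.mul_apply, hy, hθy, hx] at h
      simpa [mul_assoc] using h
    have hb' : θ f * g' ∈ Subgroup.centralizer {ybar G} := by
      apply cent_of_conj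
      calc (θ f * g') * ybar G * (θ f * g')⁻¹
          = θ f * (g' * ybar G * g'⁻¹) * (θ f)⁻¹ := by group
        _ = θ f * ((θ f)⁻¹ * ybar G * θ f) * (θ f)⁻¹ := by rw [← hx']
        _ = ybar G := by group
    have ha' : g' * f⁻¹ ∈ Subgroup.centralizer {xbar G} := by
      apply cent_of_conj
      calc (g' * f⁻¹) * xbar G * (g' * f⁻¹)⁻¹
          = g' * (f⁻¹ * xbar G * f) * g'⁻¹ := by group
        _ = xbar G := hy'.symm
    exact ⟨g' * f⁻¹, ha', (θ f * g')⁻¹, inv_mem hb', by group⟩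
  · -- (iii)
    intro φ f hx hy hex
    obtain ⟨a, ha, b, hb, hab⟩ := hex
    have key : a * f * b * θ f = 1 := by rw [hab]; group
    set g' : Gbar G := a * f with hg'
    have hθfg : θ f * g' = b⁻¹ := by
      have h2 : θ f = b⁻¹ * f⁻¹ * a⁻¹ := by
        calc θ f = b⁻¹ * f⁻¹ * a⁻¹ * (a * f * b * θ f) := by group
          _ = b⁻¹ * f⁻¹ * a⁻¹ := by rw [key]; group
      rw [h2, hg']; group
    set c : Gbar G := (φ * θ).symm g' with hc'
    have hc : φ (θ c) = g' := (φ * θ).apply_symm_apply g'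
    have hconj : ∀ z, (φ * θ * MulAut.conj c) z = g' * (φ (θ z)) * g'⁻¹ := by
      intro z
      have h0 : (φ * θ * MulAut.conj c) z = φ (θ (c * z * c⁻¹)) := rfl
      rw [h0, map_mul, map_mul, map_inv, map_mul, map_mul, map_inv, hc]
    have heq2 : φ * θ * MulAut.conj c = θ * φ := by
      apply aut_ext
      · rw [hconj]
        simp only [MulAut.mul_apply]
        rw [hθx, hy, hx, map_mul, map_mul, map_inv, hθx]
        calc g' * ybar G * g'⁻¹
            = (θ f)⁻¹ * ((θ f * g') * ybar G * (θ f * g')⁻¹) * θ f := by group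
          _ = (θ f)⁻¹ * (b⁻¹ * ybar G * (b⁻¹)⁻¹) * θ f := by rw [hθfg]
          _ = (θ f)⁻¹ * ybar G * θ f := by rw [cent_conj (inv_mem hb)]
      · rw [hconj]
        simp only [MulAut.mul_apply]
        rw [hθy, hx, hy, hθy]
        calc g' * (f⁻¹ * xbar G * f) * g'⁻¹
            = a * xbar G * a⁻¹ := by rw [hg']; group
          _ = xbar G := cent_conj ha
    have hcomm : OutMk (φ * θ) = OutMk (θ * φ) := by
      rw [OutMk, QuotientGroup.mk'_eq_mk']
      exact ⟨MulAut.conj c, ⟨c, rfl⟩, heq2⟩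
    simpa [Commute, SemiconjBy, map_mul] using hcomm
end

section
/- Let Γ be a group and G a finite group. Given a pair (g,h) of elements generating G and a group homomorphism φ : Γ → G, regard the set G as an object of the category of finite sets equipped with a right action of the free group F₂ = ⟨x,y⟩ and a commuting left action of Γ, by letting x and y act by right multiplication by g and h respectively, and letting γ ∈ Γ act by left multiplication by φ(γ). Then the objects determined by triples (g,h,φ₁) and (g′,h′,φ₂) (with ⟨g,h⟩ = ⟨g′,h′⟩ = G) are isomorphic — i.e., there exists a bijection G → G commuting with both the right F₂-actions and the left Γ-actions — if and only if there exist an automorphism α of G and an element t ∈ G such that α(g) = g′, α(h) = h′, and α(φ₁(γ)) = t⁻¹ φ₂(γ) t for all γ ∈ Γ. -/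
/-- Regard `G` as a set with a right `F₂`-action (via a generating pair `(g,h)` and right
multiplication) and a commuting left `Γ`-action (via `φ : Γ →* G` and left multiplication).
Two such objects `(g,h,φ₁)` and `(g′,h′,φ₂)` are isomorphic — there is a bijection `G → G`
commuting with both actions — if and only if there are `α ∈ Aut(G)` and `t ∈ G` with
`α(g) = g′`, `α(h) = h′` and `α(φ₁(γ)) = t⁻¹ φ₂(γ) t` for all `γ ∈ Γ`. -/
theorem stmt19 (Γ : Type) [Group Γ] (G : Type) [Group G] [Finite G]
    (g h g' h' : G)
    (hgh : Subgroup.closure {g, h} = ⊤) (hg'h' : Subgroup.closure {g', h'} = ⊤)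
    (φ₁ φ₂ : Γ →* G) :
    (∃ e : G ≃ G,
      (∀ (u : G) (w : F2),
        e (u * FreeGroup.lift (fun b => if b then g else h) w) =
          e u * FreeGroup.lift (fun b => if b then g' else h') w) ∧
      (∀ (γ : Γ) (u : G), e (φ₁ γ * u) = φ₂ γ * e u)) ↔
    (∃ (α : MulAut G) (t : G), α g = g' ∧ α h = h' ∧
      ∀ γ : Γ, α (φ₁ γ) = t⁻¹ * φ₂ γ * t) := by
  set f1 : Bool → G := fun b => if b then g else h with hf1
  set f2 : Bool → G := fun b => if b then g' else h' with hf2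
  have hr1 : Set.range f1 = {g, h} := by
    ext z
    constructor
    · rintro ⟨b, rfl⟩; cases b <;> simp [f1]
    · rintro (rfl | rfl)
      exacts [⟨true, rfl⟩, ⟨false, rfl⟩]
  constructor
  · rintro ⟨e, he1, he2⟩
    have hsurj : ∀ u : G, ∃ w : F2, FreeGroup.lift f1 w = u := by
      intro u
      have : (FreeGroup.lift f1).range = ⊤ := by
        rw [FreeGroup.range_lift_eq_closure, hr1, hgh]
      have := this ▸ Subgroup.mem_top u
      obtain ⟨w, hw⟩ := this
      exact ⟨w, hw⟩
    set c := e 1 with hc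
    have hlift : ∀ w : F2, e (FreeGroup.lift f1 w) = c * FreeGroup.lift f2 w := by
      intro w
      have := he1 1 w
      simpa using this
    have hmul : ∀ u v : G, c⁻¹ * e (u * v) = (c⁻¹ * e u) * (c⁻¹ * e v) := by
      intro u v
      obtain ⟨w, rfl⟩ := hsurj v
      rw [he1 u w, hlift w]
      group
    refine ⟨MulEquiv.mk'
      ⟨fun u => c⁻¹ * e u, fun v => e.symm (c * v),
        fun u => by simp, fun v => by simp⟩ hmul, c, ?_, ?_, ?_⟩
    · have := hlift (FreeGroup.of true)
      simp only [FreeGroup.lift_apply_of] at this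
      show c⁻¹ * e (f1 true) = g'
      rw [this]
      simp [f2]
    · have := hlift (FreeGroup.of false)
      simp only [FreeGroup.lift_apply_of] at this
      show c⁻¹ * e (f1 false) = h'
      rw [this]
      simp [f2]
    · intro γ
      show c⁻¹ * e (φ₁ γ) = c⁻¹ * φ₂ γ * c
      have := he2 γ 1
      rw [mul_one] at this
      rw [this, ← hc, mul_assoc]
  · rintro ⟨α, t, hg, hh, hφ⟩
    have key : ∀ w : F2, α (FreeGroup.lift f1 w) = FreeGroup.lift f2 w := by
      intro w
      have : (α.toMonoidHom.comp (FreeGroup.lift f1)) = FreeGroup.lift f2 := by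
        apply FreeGroup.ext_hom
        intro b
        cases b <;> simp [f1, f2, hg, hh]
      exact DFunLike.congr_fun this w
    refine ⟨α.toEquiv.trans (Equiv.mulLeft t), ?_, ?_⟩
    · intro u w
      show t * α (u * FreeGroup.lift f1 w) = t * α u * FreeGroup.lift f2 w
      rw [map_mul, key w, mul_assoc]
    · intro γ u
      show t * α (φ₁ γ * u) = φ₂ γ * (t * α u)
      rw [map_mul, hφ γ]
      group
end
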